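/- arXiv:math/0612745 — 2 statements merged into one kernel-verified Lean document; each statement's English description precedes it below -/
import Mathlib

section
/- Let f be holomorphic on Ω(c,C)^m × D_R^{n} × D_R^{q} with mixed asymptotic expansion a : [0,∞)^m × ℕ^{n} × ℕ^{q} → ℂ, and suppose |f| ≤ M on this domain. For p ∈ ℕ^q let a_p(z,y) denote the p-th Taylor coefficient of w ↦ f(z,y,w) at w = 0, so that f(z,y,w) = Σ_{p ∈ ℕ^q} a_p(z,y)·w^p on the domain. Then for every p ∈ ℕ^q: a_p is holomorphic on Ω(c,C)^m × D_R^n, a_p has mixed asymptotic expansion (α,β) ↦ a(α,β,p), and |a_p(z,y)| ≤ M/R^{|p|} for all (z,y) ∈ Ω(c,C)^m × D_R^n, where |p| := p₁+⋯+p_q. -/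
noncomputable section
open scoped Classical

/-- Logarithmic model of a standard quadratic domain:
`Ω(c,C) = {z : Re z < log c - C·√|Im z|}`. -/
def SQD (c C : ℝ) : Set ℂ := {z : ℂ | z.re < Real.log c - C * Real.sqrt |z.im|}

/-- The cartesian power `Ω(c,C)^m`. -/
def QDom (c C : ℝ) (m : ℕ) : Set (Fin m → ℂ) := {z | ∀ i, z i ∈ SQD c C}

/-- Open disc `D_R` of radius `R` centred at `0`. -/
def Disc (R : ℝ) : Set ℂ := {w : ℂ | ‖w‖ < R}

/-- Polydisc `D_R^n`. -/
def PDisc (R : ℝ) (n : ℕ) : Set (Fin n → ℂ) := {y | ∀ j, y j ∈ Disc R}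

/-- The exponential monomial `exp⟨α,z⟩`. -/
def expMono {m : ℕ} (α : Fin m → ℝ) (z : Fin m → ℂ) : ℂ :=
  Complex.exp (∑ i, (α i : ℂ) * z i)

/-- Euclidean norm of `E(z) = (exp (Re z₁), …, exp (Re z_m))`. -/
def eNorm {m : ℕ} (z : Fin m → ℂ) : ℝ :=
  Real.sqrt (∑ i, Real.exp ((z i).re) ^ 2)

/-- A generalized power series with natural support: nonnegative exponents, and in each
coordinate the set of exponents below any bound is finite. -/
def NaturalSeries {m : ℕ} (a : (Fin m → ℝ) → ℂ) : Prop :=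
  (∀ α, a α ≠ 0 → ∀ i, 0 ≤ α i) ∧
  ∀ i : Fin m, ∀ R : ℝ, 0 < R → {r : ℝ | (∃ α, a α ≠ 0 ∧ α i = r) ∧ r ≤ R}.Finite

/-- `f` has asymptotic expansion `a` on `Ω(c,C)^m`: for every `ν > 0` there is a smaller
standard quadratic domain on which `f` minus the partial sum of weight `≤ ν` is
`o(‖E(z)‖^ν)` as `‖E(z)‖ → 0`. -/
def HasAsymExp {m : ℕ} (c C : ℝ) (f : (Fin m → ℂ) → ℂ) (a : (Fin m → ℝ) → ℂ) : Prop :=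
  NaturalSeries a ∧
  ∀ ν : ℝ, 0 < ν → ∃ c' C' : ℝ, 0 < c' ∧ 0 < C' ∧ SQD c' C' ⊆ SQD c C ∧
    ∃ F : Finset (Fin m → ℝ),
      (∀ α, α ∈ F ↔ a α ≠ 0 ∧ ∑ i, α i ≤ ν) ∧
      ∀ ε : ℝ, 0 < ε → ∃ δ : ℝ, 0 < δ ∧
        ∀ z ∈ QDom c' C' m, eNorm z < δ →
          ‖f z - ∑ α ∈ F, a α * expMono α z‖ ≤ ε * eNorm z ^ ν

/-- Euclidean norm of `(E(z),y) = (exp Re z₁, …, exp Re z_m, |y₁|, …, |y_n|)`. -/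
def mixedNorm {m n : ℕ} (z : Fin m → ℂ) (y : Fin n → ℂ) : ℝ :=
  Real.sqrt (∑ i, Real.exp ((z i).re) ^ 2 + ∑ j, ‖y j‖ ^ 2)

/-- A mixed series: coefficient function with natural support in the first `m`
(real-exponent) coordinates. -/
def MixedNatural {m n : ℕ} (a : (Fin m → ℝ) → (Fin n → ℕ) → ℂ) : Prop :=
  (∀ α β, a α β ≠ 0 → ∀ i, 0 ≤ α i) ∧
  ∀ i : Fin m, ∀ R : ℝ, 0 < R →
    {r : ℝ | (∃ α β, a α β ≠ 0 ∧ α i = r) ∧ r ≤ R}.Finite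

/-- `f` has mixed asymptotic expansion `a` on `Ω(c,C)^m × D_R^n`. -/
def HasMixedAsymExp {m n : ℕ} (c C R : ℝ)
    (f : ((Fin m → ℂ) × (Fin n → ℂ)) → ℂ)
    (a : (Fin m → ℝ) → (Fin n → ℕ) → ℂ) : Prop :=
  MixedNatural a ∧
  ∀ ν : ℝ, 0 < ν → ∃ c' C' R' : ℝ, 0 < c' ∧ 0 < C' ∧ 0 < R' ∧ R' ≤ R ∧
    SQD c' C' ⊆ SQD c C ∧
    ∃ F : Finset ((Fin m → ℝ) × (Fin n → ℕ)),
      (∀ p, p ∈ F ↔ a p.1 p.2 ≠ 0 ∧ (∑ i, p.1 i) + (∑ j, (p.2 j : ℝ)) ≤ ν) ∧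
      ∀ ε : ℝ, 0 < ε → ∃ δ : ℝ, 0 < δ ∧
        ∀ z ∈ QDom c' C' m, ∀ y ∈ PDisc R' n, mixedNorm z y < δ →
          ‖f (z, y) - ∑ p ∈ F, a p.1 p.2 * expMono p.1 z * ∏ j, (y j) ^ (p.2 j)‖
            ≤ ε * mixedNorm z y ^ ν



namespace S7
open Complex


open Complex Finset

def fwt {q : ℕ} (p : Fin q → ℕ) : ℕ := ∑ j, p j

def zt (N : ℕ) : ℂ := Complex.exp (2 * Real.pi * Complex.I / N)

lemma zt_ne_zero (N : ℕ) : zt N ≠ 0 := Complex.exp_ne_zero _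

lemma zt_norm (N : ℕ) : ‖zt N‖ = 1 := by
  have h : (2 * (Real.pi : ℂ) * Complex.I / (N : ℂ)) = ((2 * Real.pi / N : ℝ) : ℂ) * Complex.I := by
    push_cast; ring
  rw [zt, h, Complex.norm_exp_ofReal_mul_I]

lemma zt_pow_N {N : ℕ} (hN : 0 < N) : zt N ^ N = 1 :=
  (Complex.isPrimitiveRoot_exp N hN.ne').pow_eq_one

lemma zt_pow_mod {N : ℕ} (hN : 0 < N) (a : ℕ) : zt N ^ a = zt N ^ (a % N) := by
  conv_lhs => rw [← Nat.div_add_mod a N]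
  rw [pow_add, pow_mul, zt_pow_N hN, one_pow, one_mul]

lemma zt_pow_eq_iff {N : ℕ} (hN : 0 < N) {a b : ℕ} :
    zt N ^ a = zt N ^ b ↔ a % N = b % N := by
  constructor
  · intro h
    rw [zt_pow_mod hN a, zt_pow_mod hN b] at h
    exact (Complex.isPrimitiveRoot_exp N hN.ne').pow_inj (Nat.mod_lt _ hN) (Nat.mod_lt _ hN) h
  · intro h; rw [zt_pow_mod hN a, zt_pow_mod hN b, h]

lemma sum_pow_root {N : ℕ} (hN : 0 < N) {ω : ℂ} (h : ω ^ N = 1) :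
    ∑ t : Fin N, ω ^ (t : ℕ) = if ω = 1 then (N : ℂ) else 0 := by
  rw [Fin.sum_univ_eq_sum_range]
  split_ifs with h1
  · simp [h1]
  · rw [geom_sum_eq h1, h]; simp

def avgF (q N : ℕ) (p : Fin q → ℕ) (r : ℝ) (G : (Fin q → ℂ) → ℂ) : ℂ :=
  ((N : ℂ) ^ q)⁻¹ * ∑ k : Fin q → Fin N,
    (∏ j, zt N ^ ((k j : ℕ) * p j))⁻¹ * G (fun j => (r : ℂ) * zt N ^ (k j : ℕ))

lemma avg_hasSum {q : ℕ} {N : ℕ} (hN : 0 < N) (p : Fin q → ℕ)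
    (cf : (Fin q → ℕ) → ℂ) {r : ℝ} (hr : 0 < r) (G : (Fin q → ℂ) → ℂ)
    (hsum : ∀ w : Fin q → ℂ, (∀ j, ‖w j‖ = r) →
      HasSum (fun p' => cf p' * ∏ j, w j ^ p' j) (G w)) :
    HasSum (fun p' => if ∀ j, p' j % N = p j % N then cf p' * (r : ℂ) ^ fwt p' else 0)
      (avgF q N p r G) := by
  have hnorm : ∀ (k : Fin q → Fin N) (j : Fin q), ‖(r : ℂ) * zt N ^ ((k j : ℕ))‖ = r := by
    intro k j
    rw [norm_mul, norm_pow, zt_norm, one_pow, mul_one, Complex.norm_real,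
      Real.norm_eq_abs, abs_of_pos hr]
  have h1 : ∀ k : Fin q → Fin N, HasSum
      (fun p' => (∏ j, zt N ^ ((k j : ℕ) * p j))⁻¹ *
        (cf p' * ∏ j, ((r : ℂ) * zt N ^ (k j : ℕ)) ^ p' j))
      ((∏ j, zt N ^ ((k j : ℕ) * p j))⁻¹ * G (fun j => (r : ℂ) * zt N ^ (k j : ℕ))) :=
    fun k => (hsum _ (hnorm k)).mul_left _
  have h2 := hasSum_sum (s := Finset.univ) (fun k _ => h1 k)
  have h3 := h2.mul_left ((N : ℂ) ^ q)⁻¹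
  have hNC : ((N : ℂ) ^ q) ≠ 0 := pow_ne_zero _ (Nat.cast_ne_zero.mpr hN.ne')
  have hfun : (fun p' : Fin q → ℕ => ((N : ℂ) ^ q)⁻¹ *
      ∑ k : Fin q → Fin N, (∏ j, zt N ^ ((k j : ℕ) * p j))⁻¹ *
        (cf p' * ∏ j, ((r : ℂ) * zt N ^ (k j : ℕ)) ^ p' j))
      = (fun p' => if ∀ j, p' j % N = p j % N then cf p' * (r : ℂ) ^ fwt p' else 0) := by
    funext p'
    have hterm : ∀ k : Fin q → Fin N,
        (∏ j, zt N ^ ((k j : ℕ) * p j))⁻¹ *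
          (cf p' * ∏ j, ((r : ℂ) * zt N ^ (k j : ℕ)) ^ p' j)
        = cf p' * (r : ℂ) ^ fwt p' *
            ∏ j, (zt N ^ p' j * (zt N ^ p j)⁻¹) ^ (k j : ℕ) := by
      intro k
      have e1 : ∏ j, ((r : ℂ) * zt N ^ (k j : ℕ)) ^ p' j
          = (r : ℂ) ^ fwt p' * ∏ j, (zt N ^ p' j) ^ (k j : ℕ) := by
        rw [fwt, ← Finset.prod_pow_eq_pow_sum]
        rw [← Finset.prod_mul_distrib]
        refine Finset.prod_congr rfl fun j _ => ?_
        rw [mul_pow, ← pow_mul, ← pow_mul, Nat.mul_comm]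
      have e2 : (∏ j, zt N ^ ((k j : ℕ) * p j))⁻¹
          = ∏ j, ((zt N ^ p j)⁻¹) ^ (k j : ℕ) := by
        rw [← Finset.prod_inv_distrib]
        refine Finset.prod_congr rfl fun j _ => ?_
        rw [← inv_pow, ← inv_pow, ← pow_mul, Nat.mul_comm]
      have e4 : (∏ j, ((zt N ^ p j)⁻¹) ^ (k j : ℕ)) * (∏ j, (zt N ^ p' j) ^ (k j : ℕ))
          = ∏ j, (zt N ^ p' j * (zt N ^ p j)⁻¹) ^ (k j : ℕ) := by
        rw [← Finset.prod_mul_distrib]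
        exact Finset.prod_congr rfl fun j _ => by rw [← mul_pow, mul_comm]
      rw [e1, e2, ← e4]
      ring
    rw [Finset.sum_congr rfl (fun k _ => hterm k), ← Finset.mul_sum]
    have hswap : (∑ k : Fin q → Fin N, ∏ j, (zt N ^ p' j * (zt N ^ p j)⁻¹) ^ (k j : ℕ))
        = ∏ j, ∑ t : Fin N, (zt N ^ p' j * (zt N ^ p j)⁻¹) ^ (t : ℕ) := by
      rw [Finset.prod_univ_sum, Fintype.piFinset_univ]
    rw [hswap]
    have homega : ∀ j : Fin q,
        ∑ t : Fin N, (zt N ^ p' j * (zt N ^ p j)⁻¹) ^ (t : ℕ)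
        = if p' j % N = p j % N then (N : ℂ) else 0 := by
      intro j
      have hpow : (zt N ^ p' j * (zt N ^ p j)⁻¹) ^ N = 1 := by
        rw [mul_pow, inv_pow, ← pow_mul, ← pow_mul, Nat.mul_comm (p' j) N,
          Nat.mul_comm (p j) N, pow_mul, pow_mul, zt_pow_N hN, one_pow, one_pow, inv_one,
          mul_one]
      rw [sum_pow_root hN hpow]
      exact if_congr (by rw [mul_inv_eq_one₀ (pow_ne_zero _ (zt_ne_zero N)),
        zt_pow_eq_iff hN]) rfl rfl
    rw [Finset.prod_congr rfl fun j _ => homega j]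
    by_cases hall : ∀ j, p' j % N = p j % N
    · rw [if_pos hall]
      rw [Finset.prod_congr rfl fun j _ => if_pos (hall j), Finset.prod_const,
        Finset.card_univ, Fintype.card_fin]
      field_simp
    · rw [if_neg hall]
      push_neg at hall
      obtain ⟨j0, hj0⟩ := hall
      have hz : (∏ j, if p' j % N = p j % N then (N : ℂ) else 0) = 0 :=
        Finset.prod_eq_zero (Finset.mem_univ j0) (if_neg hj0)
      rw [hz, mul_zero, mul_zero]
  rw [hfun] at h3
  exact h3

def tailS (q N : ℕ) (t : ℝ) : ℝ := ∑' p' : Fin q → ℕ, if N ≤ fwt p' then t ^ fwt p' else 0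

lemma geomPi_summable (q : ℕ) {t : ℝ} (h0 : 0 ≤ t) (h1 : t < 1) :
    Summable (fun p : Fin q → ℕ => t ^ fwt p) := by
  induction q with
  | zero => exact Summable.of_finite
  | succ q ih =>
      have hgeo : Summable (fun n : ℕ => t ^ n) := summable_geometric_of_lt_one h0 h1
      have hprod : Summable (fun x : ℕ × (Fin q → ℕ) => t ^ x.1 * t ^ fwt x.2) :=
        Summable.mul_of_nonneg (f := fun n : ℕ => t ^ n) (g := fun p : Fin q → ℕ => t ^ fwt p)
          hgeo ih (fun n => pow_nonneg h0 n) (fun v => pow_nonneg h0 _)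
      have he : (fun p : Fin (q + 1) → ℕ => t ^ fwt p) ∘ (Fin.consEquiv (fun _ => ℕ))
          = fun x : ℕ × (Fin q → ℕ) => t ^ x.1 * t ^ fwt x.2 := by
        funext x
        simp only [Function.comp, Fin.consEquiv_apply, fwt, Fin.sum_cons, pow_add]
      refine (Equiv.summable_iff (Fin.consEquiv fun _ => ℕ)).mp ?_
      rw [he]
      exact hprod

lemma tail_small (q : ℕ) {t : ℝ} (h0 : 0 ≤ t) (h1 : t < 1) {ε : ℝ} (hε : 0 < ε) :
    ∃ N₀ : ℕ, ∀ N ≥ N₀, tailS q N t ≤ ε := by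
  have hg := geomPi_summable q h0 h1
  have htd := tendsto_tsum_compl_atTop_zero (fun p : Fin q → ℕ => t ^ fwt p)
  obtain ⟨s₀, hs₀⟩ := ((tendsto_order.1 htd).2 ε hε).exists
  refine ⟨s₀.sup fwt + 1, fun N hN => ?_⟩
  have hsub : ∀ p' : Fin q → ℕ, (if N ≤ fwt p' then t ^ fwt p' else 0)
      ≤ Set.indicator {x | x ∉ s₀} (fun p => t ^ fwt p) p' := by
    intro p'
    by_cases h : N ≤ fwt p'
    · rw [if_pos h]
      have hnot : p' ∉ s₀ := by
        intro hmem
        have := Finset.le_sup (f := fwt) hmem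
        omega
      rw [Set.indicator_of_mem (show p' ∈ {x | x ∉ s₀} from hnot) (fun p => t ^ fwt p)]
    · rw [if_neg h]
      exact Set.indicator_nonneg (fun p _ => pow_nonneg h0 _) _
  have hites : Summable (fun p' : Fin q → ℕ => if N ≤ fwt p' then t ^ fwt p' else 0) :=
    Summable.of_nonneg_of_le (fun p' => by positivity)
      (fun p' => by split_ifs with h; exacts [le_rfl, pow_nonneg h0 _]) hg
  have hile : tailS q N t ≤ ∑' p', Set.indicator {x | x ∉ s₀} (fun p => t ^ fwt p) p' :=
    Summable.tsum_le_tsum hsub hites (hg.indicator _)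
  have heq : (∑' p', Set.indicator {x | x ∉ s₀} (fun p => t ^ fwt p) p')
      = ∑' p' : {x : Fin q → ℕ // x ∉ s₀}, t ^ fwt p'.1 := (_root_.tsum_subtype _ _).symm
  exact le_trans hile (by rw [heq]; exact hs₀.le)

lemma avg_dist {q N : ℕ} (hN : 0 < N) {p : Fin q → ℕ} (hp : ∀ j, p j < N)
    (cf : (Fin q → ℕ) → ℂ) {r ρ K : ℝ} (hr : 0 < r) (hρ : r < ρ)
    (hK : ∀ p', ‖cf p'‖ * ρ ^ fwt p' ≤ K)
    (G : (Fin q → ℂ) → ℂ)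
    (hsum : ∀ w : Fin q → ℂ, (∀ j, ‖w j‖ = r) →
      HasSum (fun p' => cf p' * ∏ j, w j ^ p' j) (G w)) :
    ‖cf p * (r : ℂ) ^ fwt p - avgF q N p r G‖ ≤ K * tailS q N (r / ρ) := by
  have hρ0 : 0 < ρ := hr.trans hρ
  have hK0 : 0 ≤ K := le_trans (by positivity) (hK p)
  have ht0 : 0 ≤ r / ρ := by positivity
  have ht1 : r / ρ < 1 := (div_lt_one hρ0).mpr hρ
  have h := avg_hasSum hN p cf hr G hsum
  set F : (Fin q → ℕ) → ℂ :=
    fun p' => if ∀ j, p' j % N = p j % N then cf p' * (r : ℂ) ^ fwt p' else 0 with hF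
  have hFp : F p = cf p * (r : ℂ) ^ fwt p := if_pos (fun j => rfl)
  have h2 : HasSum (fun p' => F p' - if p' = p then cf p * (r : ℂ) ^ fwt p else 0)
      (avgF q N p r G - cf p * (r : ℂ) ^ fwt p) := h.sub (hasSum_ite_eq p _)
  have hD : ∀ p', ‖F p' - if p' = p then cf p * (r : ℂ) ^ fwt p else 0‖
      ≤ (if N ≤ fwt p' then K * (r / ρ) ^ fwt p' else 0) := by
    intro p'
    by_cases he : p' = p
    · subst he
      rw [if_pos rfl, hFp, sub_self, norm_zero]
      split_ifs with h'
      · positivity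
      · exact le_rfl
    · rw [if_neg he, sub_zero]
      by_cases hc : ∀ j, p' j % N = p j % N
      · have hge : N ≤ fwt p' := by
          obtain ⟨j0, hj0⟩ := Function.ne_iff.mp he
          have ha : p j0 % N = p j0 := Nat.mod_eq_of_lt (hp j0)
          have hb : p' j0 % N = p j0 := (hc j0).trans ha
          have hc' : N ≤ p' j0 := by
            by_contra hlt
            push_neg at hlt
            rw [Nat.mod_eq_of_lt hlt] at hb
            exact hj0 hb
          exact le_trans hc'
            (Finset.single_le_sum (f := p') (fun j _ => Nat.zero_le _) (Finset.mem_univ j0))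
        rw [if_pos hge]
        have hFv : F p' = cf p' * (r : ℂ) ^ fwt p' := if_pos hc
        rw [hFv, norm_mul, norm_pow, Complex.norm_real, Real.norm_eq_abs, abs_of_pos hr]
        have hrsplit : r ^ fwt p' = ρ ^ fwt p' * (r / ρ) ^ fwt p' := by
          rw [← mul_pow]
          congr 1
          field_simp
        rw [hrsplit, ← mul_assoc]
        exact mul_le_mul_of_nonneg_right (hK p') (pow_nonneg ht0 _)
      · have hFv : F p' = 0 := if_neg hc
        rw [hFv, norm_zero]
        split_ifs with h'
        · positivity
        · exact le_rfl
  have hmaster : Summable (fun p' : Fin q → ℕ => K * (r / ρ) ^ fwt p') :=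
    (geomPi_summable q ht0 ht1).mul_left K
  have hitele : ∀ p' : Fin q → ℕ,
      (if N ≤ fwt p' then K * (r / ρ) ^ fwt p' else 0) ≤ K * (r / ρ) ^ fwt p' := by
    intro p'
    split_ifs with h'
    · exact le_rfl
    · positivity
  have hsummable : Summable (fun p' => ‖F p' - if p' = p then cf p * (r : ℂ) ^ fwt p else 0‖) :=
    Summable.of_nonneg_of_le (fun _ => norm_nonneg _)
      (fun p' => le_trans (hD p') (hitele p')) hmaster
  have hites : Summable (fun p' : Fin q → ℕ => if N ≤ fwt p' then K * (r / ρ) ^ fwt p' else 0) :=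
    Summable.of_nonneg_of_le (fun p' => by split_ifs with h' <;> positivity)
      hitele hmaster
  calc ‖cf p * (r : ℂ) ^ fwt p - avgF q N p r G‖
      = ‖avgF q N p r G - cf p * (r : ℂ) ^ fwt p‖ := norm_sub_rev _ _
    _ = ‖∑' p', (F p' - if p' = p then cf p * (r : ℂ) ^ fwt p else 0)‖ := by rw [h2.tsum_eq]
    _ ≤ ∑' p', ‖F p' - if p' = p then cf p * (r : ℂ) ^ fwt p else 0‖ :=
        norm_tsum_le_tsum_norm hsummable
    _ ≤ ∑' p' : Fin q → ℕ, (if N ≤ fwt p' then K * (r / ρ) ^ fwt p' else 0) :=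
        Summable.tsum_le_tsum hD hsummable hites
    _ = K * tailS q N (r / ρ) := by
        rw [tailS, ← tsum_mul_left]
        congr 1
        funext p'
        rw [mul_ite, mul_zero]

lemma coeff_le {q : ℕ} (cf : (Fin q → ℕ) → ℂ) {r ρ K B : ℝ} (hr : 0 < r) (hρ : r < ρ)
    (hB : 0 ≤ B)
    (hK : ∀ p', ‖cf p'‖ * ρ ^ fwt p' ≤ K)
    (G : (Fin q → ℂ) → ℂ)
    (hsum : ∀ w : Fin q → ℂ, (∀ j, ‖w j‖ = r) →
      HasSum (fun p' => cf p' * ∏ j, w j ^ p' j) (G w))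
    (hGB : ∀ w : Fin q → ℂ, (∀ j, ‖w j‖ = r) → ‖G w‖ ≤ B)
    (p : Fin q → ℕ) : ‖cf p‖ * r ^ fwt p ≤ B := by
  have hρ0 : 0 < ρ := hr.trans hρ
  have hK0 : 0 ≤ K := le_trans (by positivity) (hK p)
  refine le_of_forall_pos_le_add fun ε hε => ?_
  have ht0 : 0 ≤ r / ρ := by positivity
  have ht1 : r / ρ < 1 := (div_lt_one hρ0).mpr hρ
  obtain ⟨N₀, hN₀⟩ := tail_small q ht0 ht1 (ε := ε / (K + 1)) (by positivity)
  set N := N₀ + 1 + Finset.univ.sup p with hNdef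
  have hN : 0 < N := by omega
  have hp : ∀ j, p j < N := fun j =>
    lt_of_le_of_lt (Finset.le_sup (Finset.mem_univ j)) (by omega)
  have hd := avg_dist hN hp cf hr hρ hK G hsum
  have havg : ‖avgF q N p r G‖ ≤ B := by
    rw [avgF, norm_mul, norm_inv, norm_pow, Complex.norm_natCast]
    have hterm : ∀ k : Fin q → Fin N,
        ‖(∏ j, zt N ^ ((k j : ℕ) * p j))⁻¹ * G (fun j => (r : ℂ) * zt N ^ (k j : ℕ))‖ ≤ B := by
      intro k
      rw [norm_mul, norm_inv, norm_prod]
      have h1 : ∀ j : Fin q, ‖zt N ^ ((k j : ℕ) * p j)‖ = 1 := by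
        intro j; rw [norm_pow, zt_norm, one_pow]
      rw [Finset.prod_congr rfl fun j _ => h1 j, Finset.prod_const_one, inv_one, one_mul]
      exact hGB _ (fun j => by
        rw [norm_mul, norm_pow, zt_norm, one_pow, mul_one, Complex.norm_real,
          Real.norm_eq_abs, abs_of_pos hr])
    have hsumle : ‖∑ k : Fin q → Fin N,
        (∏ j, zt N ^ ((k j : ℕ) * p j))⁻¹ * G (fun j => (r : ℂ) * zt N ^ (k j : ℕ))‖
        ≤ (N : ℝ) ^ q * B := by
      refine le_trans (norm_sum_le _ _) ?_
      refine le_trans (Finset.sum_le_sum fun k _ => hterm k) ?_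
      rw [Finset.sum_const, Finset.card_univ]
      have hcard : Fintype.card (Fin q → Fin N) = N ^ q := by
        simp [Fintype.card_pi]
      rw [hcard, nsmul_eq_mul]
      push_cast
      exact le_refl _
    refine le_trans (mul_le_mul_of_nonneg_left hsumle (by positivity)) ?_
    rw [← mul_assoc, inv_mul_cancel₀ (by positivity), one_mul]
  have hnorm : ‖cf p‖ * r ^ fwt p = ‖cf p * (r : ℂ) ^ fwt p‖ := by
    rw [norm_mul, norm_pow, Complex.norm_real, Real.norm_eq_abs, abs_of_pos hr]
  have htri : ‖cf p * (r : ℂ) ^ fwt p‖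
      ≤ ‖avgF q N p r G‖ + ‖cf p * (r : ℂ) ^ fwt p - avgF q N p r G‖ := by
    have : cf p * (r : ℂ) ^ fwt p
        = avgF q N p r G + (cf p * (r : ℂ) ^ fwt p - avgF q N p r G) := by ring
    calc ‖cf p * (r : ℂ) ^ fwt p‖
        = ‖avgF q N p r G + (cf p * (r : ℂ) ^ fwt p - avgF q N p r G)‖ := by rw [← this]
      _ ≤ _ := norm_add_le _ _
  have htail : K * tailS q N (r / ρ) ≤ ε := by
    have h5 : K * tailS q N (r / ρ) ≤ K * (ε / (K + 1)) :=
      mul_le_mul_of_nonneg_left (hN₀ N (by omega)) hK0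
    have h6 : K * (ε / (K + 1)) ≤ ε := by
      rw [mul_comm, div_mul_eq_mul_div, div_le_iff₀ (by positivity)]
      nlinarith
    exact le_trans h5 h6
  rw [hnorm]
  exact le_trans htri (add_le_add havg (le_trans hd htail))

lemma norm_fderiv_le_of_bound {E : Type*} [NormedAddCommGroup E] [NormedSpace ℂ E]
    {h : E → ℂ} {x : E} {d B : ℝ} (hd : 0 < d)
    (hdiff : DifferentiableOn ℂ h (Metric.ball x (2 * d)))
    (hb : ∀ y ∈ Metric.ball x (2 * d), ‖h y‖ ≤ B) :
    ‖fderiv ℂ h x‖ ≤ B / d := by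
  have hx : x ∈ Metric.ball x (2 * d) := Metric.mem_ball_self (by linarith)
  have hB0 : 0 ≤ B := le_trans (norm_nonneg _) (hb x hx)
  refine ContinuousLinearMap.opNorm_le_bound _ (div_nonneg hB0 hd.le) fun v => ?_
  rcases eq_or_ne v 0 with hv | hv
  · simp [hv]
  · have hv0 : (0 : ℝ) < ‖v‖ := norm_pos_iff.mpr hv
    have hvn : ((‖v‖ : ℝ) : ℂ) ≠ 0 := by
      simp only [ne_eq, Complex.ofReal_eq_zero]
      exact hv0.ne'
    set u : E := ((‖v‖ : ℝ) : ℂ)⁻¹ • v with hu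
    have hun : ∀ t : ℂ, ‖t • u‖ = ‖t‖ := by
      intro t
      rw [hu, norm_smul, norm_smul, norm_inv, Complex.norm_real, Real.norm_eq_abs,
        abs_of_pos hv0]
      field_simp
    have hmaps : ∀ t : ℂ, t ∈ Metric.ball (0 : ℂ) (2 * d) →
        x + t • u ∈ Metric.ball x (2 * d) := by
      intro t ht
      rw [Metric.mem_ball, dist_eq_norm] at ht ⊢
      rw [add_sub_cancel_left, hun t]
      simpa using ht
    have hinner : Differentiable ℂ (fun t : ℂ => x + t • u) :=
      (differentiable_id.smul_const u).const_add x
    have hφ : DifferentiableOn ℂ (fun t : ℂ => h (x + t • u)) (Metric.ball (0 : ℂ) (2 * d)) :=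
      hdiff.comp hinner.differentiableOn hmaps
    have hhx : DifferentiableAt ℂ h x := hdiff.differentiableAt (Metric.isOpen_ball.mem_nhds hx)
    have hderiv : HasDerivAt (fun t : ℂ => h (x + t • u)) (fderiv ℂ h x u) 0 := by
      have hin : HasDerivAt (fun t : ℂ => x + t • u) u 0 := by
        simpa using ((hasDerivAt_id (0 : ℂ)).smul_const u).const_add x
      have h0 : x + (0 : ℂ) • u = x := by simp
      have hl : HasFDerivAt h (fderiv ℂ h x) ((fun t : ℂ => x + t • u) 0) := by
        simpa [h0] using hhx.hasFDerivAt
      exact hl.comp_hasDerivAt 0 hin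
    have e1 : deriv (fun t : ℂ => h (x + t • u)) 0 = fderiv ℂ h x u := hderiv.deriv
    have e2 : Complex.cderiv d (fun t : ℂ => h (x + t • u)) 0
        = deriv (fun t : ℂ => h (x + t • u)) 0 :=
      Complex.cderiv_eq_deriv Metric.isOpen_ball hφ hd
        (Metric.closedBall_subset_ball (by linarith))
    have e3 : ‖Complex.cderiv d (fun t : ℂ => h (x + t • u)) 0‖ ≤ B / d := by
      refine Complex.norm_cderiv_le hd fun w hw => ?_
      rw [Metric.mem_sphere, dist_eq_norm, sub_zero] at hw
      refine hb _ ?_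
      rw [Metric.mem_ball, dist_eq_norm, add_sub_cancel_left, hun w, hw]
      linarith
    have e4 : ‖fderiv ℂ h x u‖ ≤ B / d := by rw [← e1, ← e2]; exact e3
    have hvu : ((‖v‖ : ℝ) : ℂ) • u = v := by
      rw [hu, smul_inv_smul₀ hvn]
    calc ‖fderiv ℂ h x v‖ = ‖fderiv ℂ h x (((‖v‖ : ℝ) : ℂ) • u)‖ := by rw [hvu]
      _ = ‖(((‖v‖ : ℝ) : ℂ)) • fderiv ℂ h x u‖ := by rw [map_smul]
      _ = ‖v‖ * ‖fderiv ℂ h x u‖ := by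
          rw [norm_smul, Complex.norm_real, Real.norm_eq_abs, abs_of_pos hv0]
      _ ≤ ‖v‖ * (B / d) := mul_le_mul_of_nonneg_left e4 (norm_nonneg v)
      _ = B / d * ‖v‖ := by ring

lemma uniform_limit_differentiableOn {E : Type*} [NormedAddCommGroup E] [NormedSpace ℂ E]
    {U : Set E} (hU : IsOpen U) (A : ℕ → E → ℂ) (g : E → ℂ)
    (hA : ∀ N, DifferentiableOn ℂ (A N) U)
    (hconv : TendstoUniformlyOn A g Filter.atTop U) :
    DifferentiableOn ℂ g U := by
  intro x₀ hx₀
  obtain ⟨ε₀, hε₀, hball⟩ := Metric.isOpen_iff.mp hU x₀ hx₀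
  set d := ε₀ / 4 with hddef
  have hd0 : 0 < d := by positivity
  have hball3 : Metric.ball x₀ (3 * d) ⊆ U := fun y hy => hball (by
    rw [Metric.mem_ball] at hy ⊢
    linarith)
  have hdsub : Metric.ball x₀ d ⊆ Metric.ball x₀ (3 * d) :=
    Metric.ball_subset_ball (by linarith)
  set D : ℕ → E → (E →L[ℂ] ℂ) := fun N x => fderiv ℂ (A N) x with hDdef
  have hAdiff : ∀ N : ℕ, ∀ x ∈ Metric.ball x₀ (3 * d), DifferentiableAt ℂ (A N) x := fun N x hx =>
    (hA N x (hball3 hx)).differentiableAt (hU.mem_nhds (hball3 hx))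
  have hcau := hconv.uniformCauchySeqOn
  have hball2 : ∀ x ∈ Metric.ball x₀ d, Metric.ball x (2 * d) ⊆ U := by
    intro x hx y hy
    rw [Metric.mem_ball] at hx hy
    refine hball ?_
    rw [Metric.mem_ball]
    calc dist y x₀ ≤ dist y x + dist x x₀ := dist_triangle _ _ _
      _ < 2 * d + d := by linarith
      _ < ε₀ := by rw [hddef]; linarith
  have hDcau : UniformCauchySeqOn D Filter.atTop (Metric.ball x₀ d) := by
    rw [Metric.uniformCauchySeqOn_iff]
    intro ε hε
    have hε' : 0 < ε * d / 2 := by positivity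
    obtain ⟨K0, hK0⟩ := Metric.uniformCauchySeqOn_iff.mp hcau (ε * d / 2) hε'
    refine ⟨K0, fun m hm n hn x hx => ?_⟩
    have hsub : DifferentiableOn ℂ (fun y => A m y - A n y) (Metric.ball x (2 * d)) :=
      DifferentiableOn.sub
        ((hA m).mono (hball2 x hx)) ((hA n).mono (hball2 x hx))
    have hbnd : ∀ y ∈ Metric.ball x (2 * d), ‖A m y - A n y‖ ≤ ε * d / 2 := by
      intro y hy
      have := hK0 m hm n hn y (hball2 x hx hy)
      rw [dist_eq_norm] at this
      exact this.le
    have hfd := norm_fderiv_le_of_bound hd0 hsub hbnd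
    have hxd : DifferentiableAt ℂ (A m) x := hAdiff m x (hdsub hx)
    have hxd' : DifferentiableAt ℂ (A n) x := hAdiff n x (hdsub hx)
    have heq : fderiv ℂ (fun y => A m y - A n y) x = D m x - D n x := fderiv_sub hxd hxd'
    rw [dist_eq_norm]
    calc ‖D m x - D n x‖ = ‖fderiv ℂ (fun y => A m y - A n y) x‖ := by rw [heq]
      _ ≤ ε * d / 2 / d := hfd
      _ = ε / 2 := by field_simp
      _ < ε := by linarith
  set g' : E → (E →L[ℂ] ℂ) := fun x => Filter.limUnder Filter.atTop (fun N => D N x) with hg'def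
  have hg' : ∀ x ∈ Metric.ball x₀ d,
      Filter.Tendsto (fun N => D N x) Filter.atTop (nhds (g' x)) := by
    intro x hx
    have hcs : CauchySeq (fun N => D N x) := by
      rw [Metric.cauchySeq_iff]
      intro ε hε
      obtain ⟨K0, hK0⟩ := Metric.uniformCauchySeqOn_iff.mp hDcau ε hε
      exact ⟨K0, fun m hm n hn => hK0 m hm n hn x hx⟩
    exact hcs.tendsto_limUnder
  have hDu : TendstoUniformlyOn D g' Filter.atTop (Metric.ball x₀ d) :=
    hDcau.tendstoUniformlyOn_of_tendsto hg'
  have hfg : ∀ x ∈ Metric.ball x₀ d,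
      Filter.Tendsto (fun N => A N x) Filter.atTop (nhds (g x)) := fun x hx =>
    hconv.tendsto_at (hball3 (hdsub hx))
  have hmain := hasFDerivAt_of_tendstoUniformlyOn Metric.isOpen_ball hDu
    (fun N x hx => (hAdiff N x (hdsub hx)).hasFDerivAt) hfg (Metric.mem_ball_self hd0)
  exact hmain.differentiableAt.differentiableWithinAt

end S7

namespace S7

open Complex

-- coefficient bound from sums on a polydisc, single radius
lemma coeff_le' {q : ℕ} {R r B : ℝ} (hr : 0 < r) (hrR : r < R) (hB : 0 ≤ B)
    (cf : (Fin q → ℕ) → ℂ) (G : (Fin q → ℂ) → ℂ)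
    (hsum : ∀ w : Fin q → ℂ, (∀ j, ‖w j‖ < R) →
      HasSum (fun p' => cf p' * ∏ j, w j ^ p' j) (G w))
    (hGB : ∀ w : Fin q → ℂ, (∀ j, ‖w j‖ = r) → ‖G w‖ ≤ B)
    (p : Fin q → ℕ) : ‖cf p‖ * r ^ fwt p ≤ B := by
  set ρ := (r + R) / 2 with hρdef
  have hρ1 : r < ρ := by rw [hρdef]; linarith
  have hρR : ρ < R := by rw [hρdef]; linarith
  have hρ0 : 0 < ρ := hr.trans hρ1
  have hconst : ∀ j : Fin q, ‖((ρ : ℝ) : ℂ)‖ < R := fun j => by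
    rw [Complex.norm_real, Real.norm_eq_abs, abs_of_pos hρ0]; exact hρR
  have hS := hsum (fun _ => (ρ : ℂ)) hconst
  have hSummable : Summable (fun p' : Fin q → ℕ => ‖cf p' * ∏ j, ((ρ : ℝ) : ℂ) ^ p' j‖) :=
    summable_norm_iff.mpr hS.summable
  set K := ∑' p' : Fin q → ℕ, ‖cf p' * ∏ j, ((ρ : ℝ) : ℂ) ^ p' j‖ with hKdef
  have hK : ∀ p' : Fin q → ℕ, ‖cf p'‖ * ρ ^ fwt p' ≤ K := by
    intro p'
    have hle := Summable.le_tsum hSummable p' (fun _ _ => norm_nonneg _)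
    have heq : ‖cf p' * ∏ j, ((ρ : ℝ) : ℂ) ^ p' j‖ = ‖cf p'‖ * ρ ^ fwt p' := by
      rw [norm_mul, norm_prod]
      congr 1
      have : ∀ j : Fin q, ‖((ρ : ℝ) : ℂ) ^ p' j‖ = ρ ^ p' j := fun j => by
        rw [norm_pow, Complex.norm_real, Real.norm_eq_abs, abs_of_pos hρ0]
      rw [Finset.prod_congr rfl fun j _ => this j, fwt, Finset.prod_pow_eq_pow_sum]
    rw [← heq]
    exact hle
  exact coeff_le cf hr hρ1 hB hK G
    (fun w hw => hsum w (fun j => by rw [hw j]; exact hrR)) hGB p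

end S7

lemma isOpen_SQD (c C : ℝ) : IsOpen (SQD c C) :=
  isOpen_lt Complex.continuous_re
    (continuous_const.sub (continuous_const.mul
      (Real.continuous_sqrt.comp (continuous_abs.comp Complex.continuous_im))))

lemma isOpen_QDom (c C : ℝ) (m : ℕ) : IsOpen (QDom c C m) := by
  have h : QDom c C m = Set.pi Set.univ (fun _ : Fin m => SQD c C) := by
    ext z
    simp [QDom, Set.mem_pi]
  rw [h]
  exact isOpen_set_pi Set.finite_univ (fun i _ => isOpen_SQD c C)

lemma isOpen_Disc (R : ℝ) : IsOpen (Disc R) := isOpen_lt continuous_norm continuous_const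

lemma isOpen_PDisc (R : ℝ) (n : ℕ) : IsOpen (PDisc R n) := by
  have h : PDisc R n = Set.pi Set.univ (fun _ : Fin n => Disc R) := by
    ext y
    simp [PDisc, Set.mem_pi]
  rw [h]
  exact isOpen_set_pi Set.finite_univ (fun i _ => isOpen_Disc R)

lemma append_mem_PDisc {n q : ℕ} {R : ℝ} {y : Fin n → ℂ} {w : Fin q → ℂ}
    (hy : y ∈ PDisc R n) (hw : ∀ j, ‖w j‖ < R) : Fin.append y w ∈ PDisc R (n + q) := by
  intro i
  refine Fin.addCases (fun j => ?_) (fun j => ?_) i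
  · rw [Fin.append_left]
    exact hy j
  · rw [Fin.append_right]
    exact hw j

lemma mixedNorm_sq {m n : ℕ} (z : Fin m → ℂ) (y : Fin n → ℂ) :
    mixedNorm z y ^ 2 = ∑ i, Real.exp ((z i).re) ^ 2 + ∑ j, ‖y j‖ ^ 2 := by
  rw [mixedNorm, Real.sq_sqrt]
  positivity

lemma mixedNorm_append {m n q : ℕ} (z : Fin m → ℂ) (y : Fin n → ℂ) {w : Fin q → ℂ} {s : ℝ}
    (hw : ∀ j, ‖w j‖ = s) :
    mixedNorm z (Fin.append y w) = Real.sqrt (mixedNorm z y ^ 2 + q * s ^ 2) := by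
  rw [mixedNorm, mixedNorm_sq]
  congr 1
  have hsplit : ∑ j : Fin (n + q), ‖Fin.append y w j‖ ^ 2
      = ∑ j : Fin n, ‖y j‖ ^ 2 + ∑ j : Fin q, ‖w j‖ ^ 2 := by
    rw [Fin.sum_univ_add]
    congr 1
    · exact Finset.sum_congr rfl fun j _ => by rw [Fin.append_left]
    · exact Finset.sum_congr rfl fun j _ => by rw [Fin.append_right]
  rw [hsplit]
  have : ∑ j : Fin q, ‖w j‖ ^ 2 = q * s ^ 2 := by
    rw [Finset.sum_congr rfl fun j _ => by rw [hw j]]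
    rw [Finset.sum_const, Finset.card_univ, Fintype.card_fin, nsmul_eq_mul]
  rw [this]
  ring

lemma appendMap_differentiable {m n q : ℕ} (w : Fin q → ℂ) :
    Differentiable ℂ (fun x : (Fin m → ℂ) × (Fin n → ℂ) => (x.1, Fin.append x.2 w)) := by
  refine Differentiable.prodMk differentiable_fst ?_
  rw [differentiable_pi]
  intro i
  refine Fin.addCases (fun j => ?_) (fun j => ?_) i
  · simp only [Fin.append_left]
    exact (ContinuousLinearMap.proj j : (Fin n → ℂ) →L[ℂ] ℂ).differentiable.comp
      differentiable_snd
  · simp only [Fin.append_right]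
    exact differentiable_const _


set_option maxHeartbeats 2000000 in
/-- Taylor coefficients in the last `q` disc variables of a bounded
holomorphic function with mixed asymptotic expansion: each coefficient `b_p` is holomorphic
with mixed asymptotic expansion `(α,β) ↦ a(α,(β,p))` and satisfies the Cauchy bound
`|b_p| ≤ M/R^{|p|}`. -/
theorem stmt7 (m n q : ℕ) (c C R M : ℝ) (hc : 0 < c) (hC : 0 < C) (hR : 0 < R) (hM : 0 < M)
    (f : ((Fin m → ℂ) × (Fin (n + q) → ℂ)) → ℂ)
    (hf : DifferentiableOn ℂ f ((QDom c C m) ×ˢ (PDisc R (n + q))))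
    (a : (Fin m → ℝ) → (Fin (n + q) → ℕ) → ℂ)
    (ha : HasMixedAsymExp c C R f a)
    (hbd : ∀ p ∈ (QDom c C m) ×ˢ (PDisc R (n + q)), ‖f p‖ ≤ M)
    (b : (Fin q → ℕ) → ((Fin m → ℂ) × (Fin n → ℂ)) → ℂ)
    (hb : ∀ z ∈ QDom c C m, ∀ y ∈ PDisc R n, ∀ w ∈ PDisc R q,
      HasSum (fun p : Fin q → ℕ => b p (z, y) * ∏ j, (w j) ^ (p j))
        (f (z, Fin.append y w))) :
    ∀ p : Fin q → ℕ,
      DifferentiableOn ℂ (b p) ((QDom c C m) ×ˢ (PDisc R n)) ∧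
      HasMixedAsymExp c C R (b p) (fun α β => a α (Fin.append β p)) ∧
      ∀ z ∈ QDom c C m, ∀ y ∈ PDisc R n, ‖b p (z, y)‖ ≤ M / R ^ (∑ j, p j) := by
  classical
  intro p
  -- ====== Part 3: Cauchy bounds (needed first) ======
  have key3 : ∀ (p' : Fin q → ℕ), ∀ z ∈ QDom c C m, ∀ y ∈ PDisc R n,
      ∀ r : ℝ, 0 < r → r < R → ‖b p' (z, y)‖ * r ^ S7.fwt p' ≤ M := by
    intro p' z hz y hy r hr hrR
    refine S7.coeff_le' hr hrR hM.le (fun pp => b pp (z, y))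
      (fun w => f (z, Fin.append y w)) ?_ ?_ p'
    · intro w hw
      exact hb z hz y hy w (fun j => hw j)
    · intro w hw
      refine hbd (z, Fin.append y w) ⟨hz, append_mem_PDisc hy (fun j => ?_)⟩
      rw [hw j]
      exact hrR
  have key3R : ∀ (p' : Fin q → ℕ), ∀ z ∈ QDom c C m, ∀ y ∈ PDisc R n,
      ‖b p' (z, y)‖ * R ^ S7.fwt p' ≤ M := by
    intro p' z hz y hy
    have hcont : Filter.Tendsto (fun r : ℝ => ‖b p' (z, y)‖ * r ^ S7.fwt p')
        (nhdsWithin R (Set.Iio R)) (nhds (‖b p' (z, y)‖ * R ^ S7.fwt p')) :=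
      ((continuous_const.mul (continuous_pow _)).tendsto R).mono_left nhdsWithin_le_nhds
    refine le_of_tendsto hcont ?_
    filter_upwards [Ioo_mem_nhdsLT_of_mem (Set.mem_Ioc.mpr ⟨hR, le_rfl⟩)] with r hr
    exact key3 p' z hz y hy r hr.1 hr.2
  have part3 : ∀ z ∈ QDom c C m, ∀ y ∈ PDisc R n,
      ‖b p (z, y)‖ ≤ M / R ^ (∑ j, p j) := by
    intro z hz y hy
    rw [le_div_iff₀ (by positivity)]
    exact key3R p z hz y hy
  -- ====== Part 1: holomorphy ======
  have hUopen : IsOpen ((QDom c C m) ×ˢ (PDisc R n)) :=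
    (isOpen_QDom c C m).prod (isOpen_PDisc R n)
  have hol : DifferentiableOn ℂ (b p) ((QDom c C m) ×ˢ (PDisc R n)) := by
    set r : ℝ := R / 2 with hrdef
    have hr : 0 < r := by positivity
    have hrR : r < R := by rw [hrdef]; linarith
    set ρ : ℝ := 3 * R / 4 with hρdef
    have hρr : r < ρ := by rw [hrdef, hρdef]; linarith
    have hρR : ρ < R := by rw [hρdef]; linarith
    have hρ0 : 0 < ρ := hr.trans hρr
    set A : ℕ → ((Fin m → ℂ) × (Fin n → ℂ)) → ℂ :=
      fun N x => S7.avgF q N p r (fun w => f (x.1, Fin.append x.2 w)) with hAdef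
    have hwnorm : ∀ (N : ℕ) (k : Fin q → Fin N) (j : Fin q),
        ‖(r : ℂ) * S7.zt N ^ ((k j : ℕ))‖ = r := by
      intro N k j
      rw [norm_mul, norm_pow, S7.zt_norm, one_pow, mul_one, Complex.norm_real,
        Real.norm_eq_abs, abs_of_pos hr]
    have hAdiff : ∀ N : ℕ, DifferentiableOn ℂ (A N) ((QDom c C m) ×ˢ (PDisc R n)) := by
      intro N
      rw [hAdef]
      simp only [S7.avgF]
      refine DifferentiableOn.const_mul ?_ _
      refine DifferentiableOn.fun_sum fun k _ => ?_
      refine DifferentiableOn.const_mul ?_ _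
      refine DifferentiableOn.comp hf ((appendMap_differentiable _).differentiableOn) ?_
      intro x hx
      refine ⟨hx.1, append_mem_PDisc hx.2 (fun j => ?_)⟩
      rw [hwnorm N k j]
      exact hrR
    have hconv : TendstoUniformlyOn A (fun x => b p x * (r : ℂ) ^ S7.fwt p)
        Filter.atTop ((QDom c C m) ×ˢ (PDisc R n)) := by
      rw [Metric.tendstoUniformlyOn_iff]
      intro ε hε
      have ht0 : 0 ≤ r / ρ := by positivity
      have ht1 : r / ρ < 1 := (div_lt_one hρ0).mpr hρr
      obtain ⟨N₀, hN₀⟩ := S7.tail_small q ht0 ht1 (ε := ε / (2 * (M + 1))) (by positivity)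
      rw [Filter.eventually_atTop]
      refine ⟨N₀ + 1 + Finset.univ.sup p, fun N hN => ?_⟩
      intro x hx
      have hNpos : 0 < N := by omega
      have hp : ∀ j, p j < N :=
        fun j => lt_of_le_of_lt (Finset.le_sup (Finset.mem_univ j)) (by omega)
      have hK : ∀ p' : Fin q → ℕ, ‖b p' x‖ * ρ ^ S7.fwt p' ≤ M := by
        intro p'
        have h1 := key3R p' x.1 hx.1 x.2 hx.2
        have h2 : ρ ^ S7.fwt p' ≤ R ^ S7.fwt p' := pow_le_pow_left₀ hρ0.le hρR.le _
        calc ‖b p' x‖ * ρ ^ S7.fwt p' ≤ ‖b p' x‖ * R ^ S7.fwt p' :=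
              mul_le_mul_of_nonneg_left h2 (norm_nonneg _)
          _ ≤ M := h1
      have hd := S7.avg_dist hNpos hp (fun p' => b p' x) hr hρr hK
        (fun w => f (x.1, Fin.append x.2 w))
        (fun w hw => hb x.1 hx.1 x.2 hx.2 w (fun j => show ‖w j‖ < R by rw [hw j]; exact hrR))
      rw [dist_eq_norm]
      calc ‖b p x * (r : ℂ) ^ S7.fwt p - A N x‖ ≤ M * S7.tailS q N (r / ρ) := hd
        _ ≤ M * (ε / (2 * (M + 1))) :=
            mul_le_mul_of_nonneg_left (hN₀ N (by omega)) hM.le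
        _ < ε := by
            rw [mul_comm, div_mul_eq_mul_div, div_lt_iff₀ (by positivity)]
            nlinarith
    have hg := S7.uniform_limit_differentiableOn hUopen A _ hAdiff hconv
    have hrne : ((r : ℝ) : ℂ) ≠ 0 := by
      simp only [ne_eq, Complex.ofReal_eq_zero]
      exact hr.ne'
    have hcne : (((r : ℝ) : ℂ) ^ S7.fwt p) ≠ 0 := pow_ne_zero _ hrne
    refine DifferentiableOn.congr
      (DifferentiableOn.const_mul hg ((((r : ℝ) : ℂ) ^ S7.fwt p)⁻¹)) ?_
    intro x hx
    field_simp
  -- ====== Part 2: asymptotic expansion ======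
  have part2 : HasMixedAsymExp c C R (b p) (fun α β => a α (Fin.append β p)) := by
    constructor
    · constructor
      · intro α β hne i
        exact ha.1.1 α _ hne i
      · intro i R₀ hR₀
        refine Set.Finite.subset (ha.1.2 i R₀ hR₀) ?_
        rintro x ⟨⟨α, β, hne, hxi⟩, hxR⟩
        exact ⟨⟨α, Fin.append β p, hne, hxi⟩, hxR⟩
    · intro ν hν
      have hwtp0 : (0 : ℝ) ≤ ∑ j, (p j : ℝ) := by positivity
      set ν' : ℝ := ν + ∑ j, (p j : ℝ) with hν'def
      have hν'pos : 0 < ν' := by rw [hν'def]; linarith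
      obtain ⟨c', C', R', hc', hC', hR', hR'R, hsub, F, hF, hclause⟩ := ha.2 ν' hν'pos
      refine ⟨c', C', R' / 2, hc', hC', by positivity, by linarith, hsub, ?_⟩
      set τ : ((Fin m → ℝ) × (Fin (n + q) → ℕ)) → (Fin q → ℕ) :=
        fun P => fun j => P.2 (Fin.natAdd n j) with hτdef
      set Fb : Finset ((Fin m → ℝ) × (Fin n → ℕ)) :=
        (F.filter (fun P => τ P = p)).image
          (fun P => (P.1, fun j => P.2 (Fin.castAdd q j))) with hFbdef
      have happret : ∀ P : (Fin m → ℝ) × (Fin (n + q) → ℕ), τ P = p →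
          Fin.append (fun j => P.2 (Fin.castAdd q j)) p = P.2 := by
        intro P hP
        funext i
        refine Fin.addCases (fun j => ?_) (fun j => ?_) i
        · rw [Fin.append_left]
        · rw [Fin.append_right, ← hP]
      have hsumsplit : ∀ γ : Fin (n + q) → ℕ,
          ∑ i, (γ i : ℝ) = (∑ j : Fin n, (γ (Fin.castAdd q j) : ℝ))
            + ∑ j : Fin q, (γ (Fin.natAdd n j) : ℝ) := fun γ => Fin.sum_univ_add _
      refine ⟨Fb, ?_, ?_⟩
      · -- membership characterization
        intro P
        constructor
        · intro hP
          rw [hFbdef] at hP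
          obtain ⟨Q, hQ, rfl⟩ := Finset.mem_image.mp hP
          obtain ⟨hQF, hQτ⟩ := Finset.mem_filter.mp hQ
          obtain ⟨hQne, hQwt⟩ := (hF Q).mp hQF
          have happ := happret Q hQτ
          constructor
          · simpa [happ] using hQne
          · have hs := hsumsplit Q.2
            have hps : ∑ j : Fin q, (Q.2 (Fin.natAdd n j) : ℝ) = ∑ j, (p j : ℝ) := by
              refine Finset.sum_congr rfl fun j _ => ?_
              have hQj : Q.2 (Fin.natAdd n j) = p j := congrFun hQτ j
              rw [hQj]
            simp only
            rw [hν'def] at hQwt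
            rw [hs, hps] at hQwt
            linarith
        · rintro ⟨hne, hwt⟩
          rw [hFbdef]
          refine Finset.mem_image.mpr ⟨(P.1, Fin.append P.2 p), ?_, ?_⟩
          · refine Finset.mem_filter.mpr ⟨(hF _).mpr ⟨hne, ?_⟩, ?_⟩
            · have hs := hsumsplit (Fin.append P.2 p)
              have e1 : ∑ j : Fin n, ((Fin.append P.2 p) (Fin.castAdd q j) : ℝ)
                  = ∑ j, (P.2 j : ℝ) :=
                Finset.sum_congr rfl fun j _ => by rw [Fin.append_left]
              have e2 : ∑ j : Fin q, ((Fin.append P.2 p) (Fin.natAdd n j) : ℝ)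
                  = ∑ j, (p j : ℝ) :=
                Finset.sum_congr rfl fun j _ => by rw [Fin.append_right]
              rw [hν'def]
              simp only at hwt ⊢
              rw [hs, e1, e2]
              linarith
            · funext j
              rw [hτdef]
              simp only
              rw [Fin.append_right]
          · refine Prod.ext rfl ?_
            funext j
            simp only
            rw [Fin.append_left]
      · -- the ε–δ clause
        intro ε hε
        set Cq : ℝ := Real.sqrt (1 + q) ^ (ν' : ℝ) with hCqdef
        have hCq0 : 0 ≤ Cq := Real.rpow_nonneg (Real.sqrt_nonneg _) _
        set ε₁ : ℝ := ε / (Cq + 1) with hε₁def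
        have hε₁ : 0 < ε₁ := by rw [hε₁def]; positivity
        obtain ⟨δ, hδ, hδclause⟩ := hclause ε₁ hε₁
        have hsqpos : 0 < Real.sqrt (1 + q) := Real.sqrt_pos.mpr (by positivity)
        set δb : ℝ := min (δ / Real.sqrt (1 + q)) (R' / 2) with hδbdef
        have hδb : 0 < δb := lt_min (by positivity) (by positivity)
        refine ⟨δb, hδb, ?_⟩
        intro z hz y hy hzy
        have hzC : z ∈ QDom c C m := fun i => hsub (hz i)
        have hy' : ∀ j, ‖y j‖ < R' / 2 := fun j => hy j
        have hyR' : y ∈ PDisc R' n := fun j => lt_trans (hy' j) (by linarith)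
        have hyR : y ∈ PDisc R n := fun j => lt_trans (hy' j) (by linarith)
        set polyc : (Fin q → ℕ) → ℂ := fun p' =>
          ∑ P ∈ F.filter (fun P => τ P = p'), a P.1 P.2 * expMono P.1 z *
            ∏ j : Fin n, (y j) ^ (P.2 (Fin.castAdd q j)) with hpolydef
        set cf : (Fin q → ℕ) → ℂ := fun p' => b p' (z, y) - polyc p' with hcfdef
        set G : (Fin q → ℂ) → ℂ := fun w => f (z, Fin.append y w) -
          ∑ P ∈ F, a P.1 P.2 * expMono P.1 z *
            ∏ i, (Fin.append y w i) ^ (P.2 i) with hGdef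
        have hsumg : ∀ w : Fin q → ℂ, (∀ j, ‖w j‖ < R) →
            HasSum (fun p' => cf p' * ∏ j, w j ^ p' j) (G w) := by
          intro w hw
          have h1 : HasSum (fun p' => b p' (z, y) * ∏ j, w j ^ p' j)
              (f (z, Fin.append y w)) := hb z hzC y hyR w (fun j => hw j)
          have h2 : HasSum (fun p' => polyc p' * ∏ j, w j ^ p' j)
              (∑ P ∈ F, a P.1 P.2 * expMono P.1 z *
                ∏ i, (Fin.append y w i) ^ (P.2 i)) := by
            have hvanish : ∀ p' ∉ F.image τ, polyc p' * ∏ j, w j ^ p' j = 0 := by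
              intro p' hp'
              have hemp : F.filter (fun P => τ P = p') = ∅ := by
                rw [Finset.filter_eq_empty_iff]
                intro P hPF hPe
                exact hp' (Finset.mem_image.mpr ⟨P, hPF, hPe⟩)
              rw [hpolydef]
              simp only [hemp, Finset.sum_empty, zero_mul]
            have h3 := hasSum_sum_of_ne_finset_zero (s := F.image τ) (L := SummationFilter.unconditional _) hvanish
            have hval : ∑ p' ∈ F.image τ, polyc p' * ∏ j, w j ^ p' j
                = ∑ P ∈ F, a P.1 P.2 * expMono P.1 z *
                    ∏ i, (Fin.append y w i) ^ (P.2 i) := by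
              have e1 : ∀ p' ∈ F.image τ, polyc p' * ∏ j, w j ^ p' j
                  = ∑ P ∈ F.filter (fun P => τ P = p'),
                      a P.1 P.2 * expMono P.1 z *
                        ∏ i, (Fin.append y w i) ^ (P.2 i) := by
                intro p' _
                rw [hpolydef]
                simp only
                rw [Finset.sum_mul]
                refine Finset.sum_congr rfl fun P hP => ?_
                have hPe : τ P = p' := (Finset.mem_filter.mp hP).2
                have hprod : ∏ i, (Fin.append y w i) ^ (P.2 i)
                    = (∏ j : Fin n, (y j) ^ (P.2 (Fin.castAdd q j)))
                        * ∏ j, w j ^ p' j := by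
                  rw [Fin.prod_univ_add]
                  congr 1
                  · exact Finset.prod_congr rfl fun j _ => by rw [Fin.append_left]
                  · rw [← hPe]
                    exact Finset.prod_congr rfl fun j _ => by rw [Fin.append_right]
                rw [hprod]
                ring
              rw [Finset.sum_congr rfl e1]
              exact Finset.sum_fiberwise_of_maps_to
                (fun P hP => Finset.mem_image_of_mem τ hP) _
            rw [← hval]
            exact h3
          have hfe : (fun p' => cf p' * ∏ j, w j ^ p' j)
              = fun p' => b p' (z, y) * ∏ j, w j ^ p' j
                  - polyc p' * ∏ j, w j ^ p' j := by
            funext p'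
            rw [hcfdef]
            ring
          rw [hGdef, hfe]
          exact h1.sub h2
        have hmain : ∀ s : ℝ, 0 < s → s < δb → mixedNorm z y ≤ s →
            ‖cf p‖ * s ^ S7.fwt p ≤ ε₁ * (Real.sqrt (1 + q) * s) ^ (ν' : ℝ) := by
          intro s hs hsδ hrs
          have hsR' : s < R' / 2 := lt_of_lt_of_le hsδ (min_le_right _ _)
          have hsR : s < R := by linarith
          refine S7.coeff_le' hs hsR (by positivity) cf G hsumg ?_ p
          intro w hw
          have hwPD : ∀ j, ‖w j‖ < R' := fun j => by rw [hw j]; linarith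
          have happmem : Fin.append y w ∈ PDisc R' (n + q) :=
            append_mem_PDisc hyR' hwPD
          have hmn : mixedNorm z (Fin.append y w)
              = Real.sqrt (mixedNorm z y ^ 2 + q * s ^ 2) := mixedNorm_append z y hw
          have hmle : mixedNorm z (Fin.append y w) ≤ Real.sqrt (1 + q) * s := by
            rw [hmn]
            have hmn0 : 0 ≤ mixedNorm z y := Real.sqrt_nonneg _
            have h1 : mixedNorm z y ^ 2 + q * s ^ 2 ≤ (1 + q) * s ^ 2 := by nlinarith
            calc Real.sqrt (mixedNorm z y ^ 2 + q * s ^ 2)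
                ≤ Real.sqrt ((1 + q) * s ^ 2) := Real.sqrt_le_sqrt h1
              _ = Real.sqrt (1 + q) * s := by
                  rw [Real.sqrt_mul (by positivity), Real.sqrt_sq hs.le]
          have hmδ : mixedNorm z (Fin.append y w) < δ := by
            have h2 : Real.sqrt (1 + q) * s < Real.sqrt (1 + q) * (δ / Real.sqrt (1 + q)) :=
              mul_lt_mul_of_pos_left (lt_of_lt_of_le hsδ (min_le_left _ _)) hsqpos
            have h3 : Real.sqrt (1 + q) * (δ / Real.sqrt (1 + q)) = δ := by
              field_simp
            calc mixedNorm z (Fin.append y w) ≤ Real.sqrt (1 + q) * s := hmle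
              _ < δ := by rw [← h3]; exact h2
          have hres := hδclause z hz (Fin.append y w) happmem hmδ
          refine le_trans hres ?_
          refine mul_le_mul_of_nonneg_left ?_ hε₁.le
          exact Real.rpow_le_rpow (Real.sqrt_nonneg _) hmle hν'pos.le
        have hcp : ∀ s : ℝ, 0 < s → s < δb → mixedNorm z y ≤ s →
            ‖cf p‖ ≤ ε₁ * Cq * s ^ (ν : ℝ) := by
          intro s hs hsδ hrs
          have h1 := hmain s hs hsδ hrs
          have h2 : (Real.sqrt (1 + q) * s) ^ (ν' : ℝ)
              = Cq * s ^ (ν' : ℝ) := Real.mul_rpow (Real.sqrt_nonneg _) hs.le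
          have hcast : ((S7.fwt p : ℕ) : ℝ) = ∑ j, (p j : ℝ) := by
            rw [S7.fwt]
            push_cast
            rfl
          have h3 : s ^ (ν' : ℝ) = s ^ (ν : ℝ) * s ^ ((S7.fwt p : ℕ) : ℝ) := by
            rw [hν'def, ← hcast, Real.rpow_add hs]
          have h4 : s ^ ((S7.fwt p : ℕ) : ℝ) = s ^ (S7.fwt p : ℕ) :=
            Real.rpow_natCast s _
          have h5 : ε₁ * (Real.sqrt (1 + q) * s) ^ (ν' : ℝ)
              = ε₁ * Cq * s ^ (ν : ℝ) * s ^ (S7.fwt p : ℕ) := by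
            rw [h2, h3, h4]
            ring
          rw [h5] at h1
          exact le_of_mul_le_mul_right h1 (pow_pos hs _)
        have hpolyp : polyc p = ∑ P ∈ Fb,
            a P.1 (Fin.append P.2 p) * expMono P.1 z * ∏ j, (y j) ^ (P.2 j) := by
          rw [hFbdef]
          have hinj : ∀ P₁ ∈ F.filter (fun P => τ P = p),
              ∀ P₂ ∈ F.filter (fun P => τ P = p),
              (P₁.1, fun j => P₁.2 (Fin.castAdd q j))
                = (P₂.1, fun j => P₂.2 (Fin.castAdd q j)) → P₁ = P₂ := by
            intro P₁ h₁ P₂ h₂ hgeq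
            have hτ₁ : τ P₁ = p := (Finset.mem_filter.mp h₁).2
            have hτ₂ : τ P₂ = p := (Finset.mem_filter.mp h₂).2
            rw [Prod.mk.injEq] at hgeq
            obtain ⟨e1, e2⟩ := hgeq
            refine Prod.ext e1 ?_
            rw [← happret P₁ hτ₁, ← happret P₂ hτ₂, e2]
          rw [Finset.sum_image hinj, hpolydef]
          refine Finset.sum_congr rfl fun P hP => ?_
          have hτP : τ P = p := (Finset.mem_filter.mp hP).2
          rw [happret P hτP]
        have hgoal : b p (z, y) - ∑ P ∈ Fb,
            a P.1 (Fin.append P.2 p) * expMono P.1 z * ∏ j, (y j) ^ (P.2 j) = cf p := by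
          have hcfp : cf p = b p (z, y) - polyc p := rfl
          rw [hcfp, hpolyp]
        rw [show (∑ P ∈ Fb, (fun α β => a α (Fin.append β p)) P.1 P.2 * expMono P.1 z *
            ∏ j, (y j) ^ (P.2 j)) = ∑ P ∈ Fb,
            a P.1 (Fin.append P.2 p) * expMono P.1 z * ∏ j, (y j) ^ (P.2 j) from rfl]
        rw [hgoal]
        have hmn0 : (0:ℝ) ≤ mixedNorm z y := Real.sqrt_nonneg _
        rcases lt_or_eq_of_le hmn0 with hpos | hzero
        · have hcp' := hcp (mixedNorm z y) hpos hzy le_rfl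
          refine le_trans hcp' ?_
          refine mul_le_mul_of_nonneg_right ?_ (Real.rpow_nonneg hpos.le _)
          rw [hε₁def, div_mul_eq_mul_div, div_le_iff₀ (by positivity)]
          nlinarith
        · rw [← hzero, Real.zero_rpow hν.ne', mul_zero]
          refine le_of_forall_pos_le_add fun η hη => ?_
          rw [zero_add]
          have hc00 : 0 ≤ ε₁ * Cq := by positivity
          set s₀ : ℝ := (η / (ε₁ * Cq + 1)) ^ (ν⁻¹ : ℝ) with hs₀def
          have hs₀ : 0 < s₀ := Real.rpow_pos_of_pos (by positivity) _
          set s : ℝ := min (δb / 2) s₀ with hsdef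
          have hs : 0 < s := lt_min (by positivity) hs₀
          have hsδ : s < δb := lt_of_le_of_lt (min_le_left _ _) (by linarith)
          have h6 := hcp s hs hsδ (by rw [← hzero]; exact hs.le)
          have h7 : s ^ (ν : ℝ) ≤ s₀ ^ (ν : ℝ) :=
            Real.rpow_le_rpow hs.le (min_le_right _ _) hν.le
          have h8 : s₀ ^ (ν : ℝ) = η / (ε₁ * Cq + 1) := by
            rw [hs₀def, ← Real.rpow_mul (by positivity), inv_mul_cancel₀ hν.ne',
              Real.rpow_one]
          calc ‖cf p‖ ≤ ε₁ * Cq * s ^ (ν : ℝ) := h6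
            _ ≤ ε₁ * Cq * (η / (ε₁ * Cq + 1)) := by
                rw [← h8]
                exact mul_le_mul_of_nonneg_left h7 hc00
            _ ≤ η := by
                rw [mul_comm, div_mul_eq_mul_div, div_le_iff₀ (by positivity)]
                nlinarith
  exact ⟨hol, part2, part3⟩
end
end

section
/- Let m ≥ 2, let 0 < c ≤ 1 and C, R > 0, let ρ > 0, and let f be holomorphic on Ω(c,C)^m × D_R^n with mixed asymptotic expansion a. Set D := C / min(√ρ, 1). Then for every z ∈ Ω(c,D)^m the point (z₁,…,z_{m−1}, ρ·z_{m−1} + z_m) lies in Ω(c,C)^m, and the function g(z,y) := f(z₁,…,z_{m−1}, ρ·z_{m−1} + z_m, y) is holomorphic on Ω(c,D)^m × D_R^n and has mixed asymptotic expansion b, where b(α,β) := a(α₁,…,α_{m−2}, α_{m−1} − ρ·α_m, α_m, β) if α_{m−1} ≥ ρ·α_m, and b(α,β) := 0 otherwise. (In logarithmic coordinates this is the singular blow-up substitution x_m ↦ x_{m−1}^ρ·x_m, and b is the image of a under the singular blow-up homomorphism B^{ρ,0}_{m,m−1}.) -/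
noncomputable section
open scoped Classical

/-- The singular blow-up substitution in logarithmic coordinates:
`z_m ↦ ρ·z_{m−1} + z_m` (0-based: last coordinate). -/
def sBlow (m : ℕ) (hm : 2 ≤ m) (ρ : ℝ) (z : Fin m → ℂ) : Fin m → ℂ :=
  Function.update z ⟨m - 1, by omega⟩
    ((ρ : ℝ) * z ⟨m - 2, by omega⟩ + z ⟨m - 1, by omega⟩)

/-- The image of a mixed series under the singular blow-up homomorphism `B^{ρ,0}_{m,m−1}`. -/
def sBlowCoef (m n : ℕ) (hm : 2 ≤ m) (ρ : ℝ)
    (a : (Fin m → ℝ) → (Fin n → ℕ) → ℂ) : (Fin m → ℝ) → (Fin n → ℕ) → ℂ :=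
  fun α β =>
    if ρ * α ⟨m - 1, by omega⟩ ≤ α ⟨m - 2, by omega⟩ then
      a (Function.update α ⟨m - 2, by omega⟩
          (α ⟨m - 2, by omega⟩ - ρ * α ⟨m - 1, by omega⟩)) β
    else 0

lemma sqrt_add_le (x y : ℝ) (hx : 0 ≤ x) (hy : 0 ≤ y) :
    Real.sqrt (x + y) ≤ Real.sqrt x + Real.sqrt y := by
  have h1 : x + y ≤ (Real.sqrt x + Real.sqrt y) ^ 2 := by
    have := Real.sq_sqrt hx; have := Real.sq_sqrt hy
    nlinarith [Real.sqrt_nonneg x, Real.sqrt_nonneg y]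
  calc Real.sqrt (x + y) ≤ Real.sqrt ((Real.sqrt x + Real.sqrt y) ^ 2) := Real.sqrt_le_sqrt h1
    _ = Real.sqrt x + Real.sqrt y := Real.sqrt_sq (by positivity)
lemma sqd_mono {c₁ c₂ C₁ C₂ : ℝ} (h0 : 0 < c₁) (hc : c₁ ≤ c₂) (hC : C₂ ≤ C₁) :
    SQD c₁ C₁ ⊆ SQD c₂ C₂ := by
  intro z hz
  simp only [SQD, Set.mem_setOf_eq] at *
  have hlog : Real.log c₁ ≤ Real.log c₂ := Real.log_le_log h0 hc
  nlinarith [Real.sqrt_nonneg |z.im|]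
lemma qdom_mono {m : ℕ} {c₁ c₂ C₁ C₂ : ℝ} (h0 : 0 < c₁) (hc : c₁ ≤ c₂) (hC : C₂ ≤ C₁) :
    QDom c₁ C₁ m ⊆ QDom c₂ C₂ m := fun _ hz i => sqd_mono h0 hc hC (hz i)
lemma mu_pos {ρ : ℝ} (hρ : 0 < ρ) : 0 < min (Real.sqrt ρ) 1 :=
  lt_min (Real.sqrt_pos.2 hρ) one_pos
lemma mu_le_one {ρ : ℝ} : min (Real.sqrt ρ) 1 ≤ 1 := min_le_right _ _
lemma rho_div_mu {ρ : ℝ} (hρ : 0 < ρ) : Real.sqrt ρ ≤ ρ / min (Real.sqrt ρ) 1 := by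
  have hs : 0 < Real.sqrt ρ := Real.sqrt_pos.2 hρ
  have hμ : 0 < min (Real.sqrt ρ) 1 := mu_pos hρ
  rw [le_div_iff₀ hμ]
  have : Real.sqrt ρ * Real.sqrt ρ = ρ := Real.mul_self_sqrt hρ.le
  calc Real.sqrt ρ * min (Real.sqrt ρ) 1 ≤ Real.sqrt ρ * Real.sqrt ρ :=
        mul_le_mul_of_nonneg_left (min_le_left _ _) hs.le
    _ = ρ := this
lemma sblow_mem (m : ℕ) (hm : 2 ≤ m) (ρ : ℝ) (hρ : 0 < ρ)
    (c₀ C₀ : ℝ) (hc₀ : 0 < c₀) (hc₁ : c₀ ≤ 1) (hC₀ : 0 < C₀)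
    {z : Fin m → ℂ} (hz : z ∈ QDom c₀ (C₀ / min (Real.sqrt ρ) 1) m) :
    sBlow m hm ρ z ∈ QDom c₀ C₀ m := by
  set μ := min (Real.sqrt ρ) 1 with hμdef
  have hμ : 0 < μ := mu_pos hρ
  have hCμ : C₀ ≤ C₀ / μ := by
    rw [le_div_iff₀ hμ]
    nlinarith [mu_le_one (ρ := ρ)]
  intro i
  by_cases hi : i = (⟨m - 1, by omega⟩ : Fin m)
  · subst hi
    have h1 := hz ⟨m - 1, by omega⟩
    have h2 := hz ⟨m - 2, by omega⟩
    simp only [SQD, QDom, Set.mem_setOf_eq] at h1 h2 ⊢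
    have hupd : sBlow m hm ρ z ⟨m - 1, by omega⟩
        = (ρ : ℂ) * z ⟨m - 2, by omega⟩ + z ⟨m - 1, by omega⟩ := by
      simp [sBlow]
    rw [hupd]
    set b2 := (z ⟨m - 2, by omega⟩ : ℂ).im
    set b1 := (z ⟨m - 1, by omega⟩ : ℂ).im
    have him : ((ρ : ℂ) * z ⟨m - 2, by omega⟩ + z ⟨m - 1, by omega⟩).im = ρ * b2 + b1 := by
      simp [Complex.add_im, Complex.mul_im]; rfl
    have hre : ((ρ : ℂ) * z ⟨m - 2, by omega⟩ + z ⟨m - 1, by omega⟩).re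
        = ρ * (z ⟨m - 2, by omega⟩ : ℂ).re + (z ⟨m - 1, by omega⟩ : ℂ).re := by
      simp [Complex.add_re, Complex.mul_re]
    rw [him, hre]
    -- key sqrt estimate
    have hsq : Real.sqrt |ρ * b2 + b1| ≤ Real.sqrt ρ * Real.sqrt |b2| + Real.sqrt |b1| := by
      have h3 : |ρ * b2 + b1| ≤ ρ * |b2| + |b1| := by
        calc |ρ * b2 + b1| ≤ |ρ * b2| + |b1| := abs_add_le _ _
          _ = ρ * |b2| + |b1| := by rw [abs_mul, abs_of_pos hρ]
      calc Real.sqrt |ρ * b2 + b1| ≤ Real.sqrt (ρ * |b2| + |b1|) := Real.sqrt_le_sqrt h3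
        _ ≤ Real.sqrt (ρ * |b2|) + Real.sqrt |b1| :=
            sqrt_add_le _ _ (by positivity) (abs_nonneg _)
        _ = Real.sqrt ρ * Real.sqrt |b2| + Real.sqrt |b1| := by
            rw [Real.sqrt_mul hρ.le]
    have hlog : Real.log c₀ ≤ 0 := Real.log_nonpos hc₀.le hc₁
    have hρμ : Real.sqrt ρ ≤ ρ / μ := rho_div_mu hρ
    -- C₀ * sqrt|ρb2+b1| ≤ ρ*(C₀/μ)*sqrt|b2| + (C₀/μ)*sqrt|b1|
    have hkey : C₀ * Real.sqrt |ρ * b2 + b1|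
        ≤ ρ * ((C₀ / μ) * Real.sqrt |b2|) + (C₀ / μ) * Real.sqrt |b1| := by
      have e1 : C₀ * Real.sqrt ρ ≤ ρ * (C₀ / μ) := by
        have := mul_le_mul_of_nonneg_left hρμ hC₀.le
        calc C₀ * Real.sqrt ρ ≤ C₀ * (ρ / μ) := this
          _ = ρ * (C₀ / μ) := by ring
      have e2 : C₀ ≤ C₀ / μ := hCμ
      have s2 : (0:ℝ) ≤ Real.sqrt |b2| := Real.sqrt_nonneg _
      have s1 : (0:ℝ) ≤ Real.sqrt |b1| := Real.sqrt_nonneg _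
      calc C₀ * Real.sqrt |ρ * b2 + b1|
          ≤ C₀ * (Real.sqrt ρ * Real.sqrt |b2| + Real.sqrt |b1|) :=
            mul_le_mul_of_nonneg_left hsq hC₀.le
        _ = (C₀ * Real.sqrt ρ) * Real.sqrt |b2| + C₀ * Real.sqrt |b1| := by ring
        _ ≤ (ρ * (C₀ / μ)) * Real.sqrt |b2| + (C₀ / μ) * Real.sqrt |b1| := by
            gcongr
        _ = ρ * ((C₀ / μ) * Real.sqrt |b2|) + (C₀ / μ) * Real.sqrt |b1| := by ring
    nlinarith [mul_lt_mul_of_pos_left h2 hρ]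
  · have hupd : sBlow m hm ρ z i = z i := by
      simp [sBlow, Function.update_of_ne hi]
    rw [hupd]
    exact sqd_mono hc₀ le_rfl hCμ (hz i)
lemma sum_update_real {m : ℕ} (α : Fin m → ℝ) (k : Fin m) (v : ℝ) :
    ∑ i, Function.update α k v i = (∑ i, α i) + (v - α k) := by
  rw [Finset.sum_update_of_mem (Finset.mem_univ k)]
  rw [← Finset.sum_erase_add Finset.univ α (Finset.mem_univ k)]
  simp [Finset.sdiff_singleton_eq_erase]
  ring
lemma sum_update_mul_left {m : ℕ} (α : Fin m → ℝ) (k : Fin m) (v : ℝ) (z : Fin m → ℂ) :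
    ∑ i, ((Function.update α k v i : ℝ) : ℂ) * z i
      = (∑ i, (α i : ℂ) * z i) + ((v : ℂ) - (α k : ℂ)) * z k := by
  have h : ∀ i, ((Function.update α k v i : ℝ) : ℂ) * z i
      = Function.update (fun j => (α j : ℂ) * z j) k ((v : ℂ) * z k) i := by
    intro i
    rcases eq_or_ne i k with rfl | hik
    · simp
    · simp [Function.update_of_ne hik]
  rw [Finset.sum_congr rfl (fun i _ => h i)]
  rw [Finset.sum_update_of_mem (Finset.mem_univ k)]
  rw [← Finset.sum_erase_add Finset.univ (fun j => (α j : ℂ) * z j) (Finset.mem_univ k)]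
  simp [Finset.sdiff_singleton_eq_erase]
  ring
lemma sum_update_mul_right {m : ℕ} (α : Fin m → ℝ) (k : Fin m) (v : ℂ) (z : Fin m → ℂ) :
    ∑ i, (α i : ℂ) * Function.update z k v i
      = (∑ i, (α i : ℂ) * z i) + (α k : ℂ) * (v - z k) := by
  have h : ∀ i, (α i : ℂ) * Function.update z k v i
      = Function.update (fun j => (α j : ℂ) * z j) k ((α k : ℂ) * v) i := by
    intro i
    rcases eq_or_ne i k with rfl | hik
    · simp
    · simp [Function.update_of_ne hik]
  rw [Finset.sum_congr rfl (fun i _ => h i)]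
  rw [Finset.sum_update_of_mem (Finset.mem_univ k)]
  rw [← Finset.sum_erase_add Finset.univ (fun j => (α j : ℂ) * z j) (Finset.mem_univ k)]
  simp [Finset.sdiff_singleton_eq_erase]
  ring
def Tmap (m : ℕ) (hm : 2 ≤ m) (ρ : ℝ) (α : Fin m → ℝ) : Fin m → ℝ :=
  Function.update α ⟨m - 2, by omega⟩
    (α ⟨m - 2, by omega⟩ + ρ * α ⟨m - 1, by omega⟩)
lemma k_ne (m : ℕ) (hm : 2 ≤ m) : (⟨m - 1, by omega⟩ : Fin m) ≠ ⟨m - 2, by omega⟩ := by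
  simp only [ne_eq, Fin.mk.injEq]; omega
lemma Tmap_apply_k1 (m : ℕ) (hm : 2 ≤ m) (ρ : ℝ) (α : Fin m → ℝ) :
    Tmap m hm ρ α ⟨m - 1, by omega⟩ = α ⟨m - 1, by omega⟩ := by
  simp [Tmap, Function.update_of_ne (k_ne m hm)]
lemma Tmap_apply_k2 (m : ℕ) (hm : 2 ≤ m) (ρ : ℝ) (α : Fin m → ℝ) :
    Tmap m hm ρ α ⟨m - 2, by omega⟩ = α ⟨m - 2, by omega⟩ + ρ * α ⟨m - 1, by omega⟩ := by
  simp [Tmap]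
lemma Tmap_apply_ne (m : ℕ) (hm : 2 ≤ m) (ρ : ℝ) (α : Fin m → ℝ)
    {i : Fin m} (hi : i ≠ ⟨m - 2, by omega⟩) : Tmap m hm ρ α i = α i := by
  simp [Tmap, Function.update_of_ne hi]
lemma Tmap_injective (m : ℕ) (hm : 2 ≤ m) (ρ : ℝ) : Function.Injective (Tmap m hm ρ) := by
  intro α α' h
  funext i
  rcases eq_or_ne i (⟨m - 2, by omega⟩ : Fin m) with rfl | hi
  · have h1 := congrFun h (⟨m - 2, by omega⟩ : Fin m)
    have h2 := congrFun h (⟨m - 1, by omega⟩ : Fin m)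
    rw [Tmap_apply_k2, Tmap_apply_k2] at h1
    rw [Tmap_apply_k1, Tmap_apply_k1] at h2
    rw [h2] at h1
    linarith
  · have h1 := congrFun h i
    rwa [Tmap_apply_ne m hm ρ _ hi, Tmap_apply_ne m hm ρ _ hi] at h1
lemma Tmap_inv (m : ℕ) (hm : 2 ≤ m) (ρ : ℝ) (α : Fin m → ℝ) :
    Tmap m hm ρ (Function.update α ⟨m - 2, by omega⟩
      (α ⟨m - 2, by omega⟩ - ρ * α ⟨m - 1, by omega⟩)) = α := by
  funext i
  rcases eq_or_ne i (⟨m - 2, by omega⟩ : Fin m) with rfl | hi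
  · rw [Tmap_apply_k2]
    rw [Function.update_self, Function.update_of_ne (k_ne m hm)]
    ring
  · rw [Tmap_apply_ne m hm ρ _ hi, Function.update_of_ne hi]
lemma sum_Tmap (m : ℕ) (hm : 2 ≤ m) (ρ : ℝ) (α : Fin m → ℝ) :
    ∑ i, Tmap m hm ρ α i = (∑ i, α i) + ρ * α ⟨m - 1, by omega⟩ := by
  rw [Tmap, sum_update_real]; ring
lemma sBlowCoef_Tmap {m n : ℕ} (hm : 2 ≤ m) (ρ : ℝ)
    (a : (Fin m → ℝ) → (Fin n → ℕ) → ℂ) (α : Fin m → ℝ) (β : Fin n → ℕ)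
    (h2 : 0 ≤ α ⟨m - 2, by omega⟩) :
    sBlowCoef m n hm ρ a (Tmap m hm ρ α) β = a α β := by
  have hcond : ρ * Tmap m hm ρ α ⟨m - 1, by omega⟩ ≤ Tmap m hm ρ α ⟨m - 2, by omega⟩ := by
    rw [Tmap_apply_k1, Tmap_apply_k2]; linarith
  rw [sBlowCoef, if_pos hcond]
  congr 1
  rw [Tmap_apply_k1, Tmap_apply_k2]
  funext i
  rcases eq_or_ne i (⟨m - 2, by omega⟩ : Fin m) with rfl | hi
  · rw [Function.update_self]; ring
  · rw [Function.update_of_ne hi, Tmap_apply_ne m hm ρ _ hi]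
lemma expMono_Tmap (m : ℕ) (hm : 2 ≤ m) (ρ : ℝ) (α : Fin m → ℝ) (z : Fin m → ℂ) :
    expMono (Tmap m hm ρ α) z = expMono α (sBlow m hm ρ z) := by
  unfold expMono Tmap sBlow
  congr 1
  rw [sum_update_mul_left, sum_update_mul_right]
  push_cast
  ring
lemma sum_mul_update_real {m : ℕ} (α x : Fin m → ℝ) (k : Fin m) (v : ℝ) :
    ∑ i, α i * Function.update x k v i = (∑ i, α i * x i) + α k * (v - x k) := by
  have h : ∀ i, α i * Function.update x k v i
      = Function.update (fun j => α j * x j) k (α k * v) i := by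
    intro i
    rcases eq_or_ne i k with rfl | hik
    · simp
    · simp [Function.update_of_ne hik]
  rw [Finset.sum_congr rfl (fun i _ => h i)]
  rw [Finset.sum_update_of_mem (Finset.mem_univ k)]
  rw [← Finset.sum_erase_add Finset.univ (fun j => α j * x j) (Finset.mem_univ k)]
  simp [Finset.sdiff_singleton_eq_erase]
  ring
lemma mixedNorm_nonneg {m n : ℕ} (z : Fin m → ℂ) (y : Fin n → ℂ) : 0 ≤ mixedNorm z y :=
  Real.sqrt_nonneg _
lemma mixedNorm_pos {m n : ℕ} (hm : 1 ≤ m) (z : Fin m → ℂ) (y : Fin n → ℂ) :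
    0 < mixedNorm z y := by
  apply Real.sqrt_pos.2
  have h1 : (0:ℝ) < ∑ i, Real.exp ((z i).re) ^ 2 := by
    have : Nonempty (Fin m) := ⟨⟨0, by omega⟩⟩
    exact Finset.sum_pos (fun i _ => by positivity) Finset.univ_nonempty
  have h2 : (0:ℝ) ≤ ∑ j, ‖y j‖ ^ 2 := Finset.sum_nonneg (fun j _ => by positivity)
  linarith
lemma exp_re_le_mixedNorm {m n : ℕ} (z : Fin m → ℂ) (y : Fin n → ℂ) (i : Fin m) :
    Real.exp ((z i).re) ≤ mixedNorm z y := by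
  have h1 : Real.exp ((z i).re) ^ 2 ≤ ∑ i', Real.exp ((z i').re) ^ 2 :=
    Finset.single_le_sum (f := fun i' => Real.exp ((z i').re) ^ 2)
      (fun i' _ => by positivity) (Finset.mem_univ i)
  have h2 : (0:ℝ) ≤ ∑ j, ‖y j‖ ^ 2 := Finset.sum_nonneg (fun j _ => by positivity)
  calc Real.exp ((z i).re) = Real.sqrt (Real.exp ((z i).re) ^ 2) :=
        (Real.sqrt_sq (Real.exp_pos _).le).symm
    _ ≤ mixedNorm z y := Real.sqrt_le_sqrt (by linarith)
lemma norm_y_le_mixedNorm {m n : ℕ} (z : Fin m → ℂ) (y : Fin n → ℂ) (j : Fin n) :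
    ‖y j‖ ≤ mixedNorm z y := by
  have h1 : ‖y j‖ ^ 2 ≤ ∑ j', ‖y j'‖ ^ 2 :=
    Finset.single_le_sum (f := fun j' => ‖y j'‖ ^ 2)
      (fun j' _ => by positivity) (Finset.mem_univ j)
  have h2 : (0:ℝ) ≤ ∑ i, Real.exp ((z i).re) ^ 2 :=
    Finset.sum_nonneg (fun i _ => by positivity)
  calc ‖y j‖ = Real.sqrt (‖y j‖ ^ 2) := (Real.sqrt_sq (norm_nonneg _)).symm
    _ ≤ mixedNorm z y := Real.sqrt_le_sqrt (by linarith)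
lemma sBlow_re_k1 (m : ℕ) (hm : 2 ≤ m) (ρ : ℝ) (z : Fin m → ℂ) :
    ((sBlow m hm ρ z) ⟨m - 1, by omega⟩).re
      = ρ * (z ⟨m - 2, by omega⟩).re + (z ⟨m - 1, by omega⟩).re := by
  simp [sBlow, Complex.add_re, Complex.mul_re]
lemma sBlow_apply_ne (m : ℕ) (hm : 2 ≤ m) (ρ : ℝ) (z : Fin m → ℂ)
    {i : Fin m} (hi : i ≠ ⟨m - 1, by omega⟩) : sBlow m hm ρ z i = z i := by
  simp [sBlow, Function.update_of_ne hi]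
lemma mixedNorm_sBlow_le {m n : ℕ} (hm : 2 ≤ m) (ρ : ℝ) (hρ : 0 < ρ)
    (z : Fin m → ℂ) (y : Fin n → ℂ) (hz2 : (z ⟨m - 2, by omega⟩).re ≤ 0) :
    mixedNorm (sBlow m hm ρ z) y ≤ mixedNorm z y := by
  apply Real.sqrt_le_sqrt
  have h : ∀ i, Real.exp (((sBlow m hm ρ z) i).re) ^ 2 ≤ Real.exp ((z i).re) ^ 2 := by
    intro i
    rcases eq_or_ne i (⟨m - 1, by omega⟩ : Fin m) with rfl | hi
    · rw [sBlow_re_k1]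
      have : ρ * (z ⟨m - 2, by omega⟩).re + (z ⟨m - 1, by omega⟩).re
          ≤ (z ⟨m - 1, by omega⟩).re := by nlinarith
      have he := Real.exp_le_exp.2 this
      nlinarith [Real.exp_pos (ρ * (z ⟨m - 2, by omega⟩).re + (z ⟨m - 1, by omega⟩).re)]
    · rw [sBlow_apply_ne m hm ρ z hi]
  have := Finset.sum_le_sum (fun i (_ : i ∈ Finset.univ) => h i)
  linarith
lemma norm_expMono {m : ℕ} (α : Fin m → ℝ) (z : Fin m → ℂ) :
    ‖expMono α z‖ = Real.exp (∑ i, α i * (z i).re) := by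
  rw [expMono, Complex.norm_exp]
  congr 1
  rw [Complex.re_sum]
  exact Finset.sum_congr rfl (fun i _ => by simp [Complex.mul_re])
lemma blow_term_bound {m n : ℕ} (hm : 2 ≤ m) (ρ : ℝ) (hρ : 0 ≤ ρ)
    (z : Fin m → ℂ) (y : Fin n → ℂ)
    (α : Fin m → ℝ) (hα : ∀ i, 0 ≤ α i) (β : Fin n → ℕ) :
    ‖expMono α (sBlow m hm ρ z) * ∏ j, y j ^ β j‖
      ≤ mixedNorm z y ^ ((∑ i, α i) + ρ * α ⟨m - 1, by omega⟩ + ∑ j, (β j : ℝ)) := by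
  set N := mixedNorm z y with hN
  have hN0 : 0 < N := mixedNorm_pos (by omega) z y
  -- exponential part
  have hre : ∑ i, α i * ((sBlow m hm ρ z) i).re
      = (∑ i, α i * (z i).re) + ρ * α ⟨m - 1, by omega⟩ * (z ⟨m - 2, by omega⟩).re := by
    have : ∀ i, ((sBlow m hm ρ z) i).re
        = Function.update (fun i' => (z i').re) ⟨m - 1, by omega⟩
            (ρ * (z ⟨m - 2, by omega⟩).re + (z ⟨m - 1, by omega⟩).re) i := by
      intro i
      rcases eq_or_ne i (⟨m - 1, by omega⟩ : Fin m) with rfl | hi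
      · rw [sBlow_re_k1]; simp
      · rw [sBlow_apply_ne m hm ρ z hi, Function.update_of_ne hi]
    rw [Finset.sum_congr rfl (fun i _ => by rw [this i])]
    rw [sum_mul_update_real]
    ring
  have hlog : ∀ i, (z i).re ≤ Real.log N := fun i =>
    (Real.le_log_iff_exp_le hN0).2 (exp_re_le_mixedNorm z y i)
  have hsum : ∑ i, α i * ((sBlow m hm ρ z) i).re
      ≤ ((∑ i, α i) + ρ * α ⟨m - 1, by omega⟩) * Real.log N := by
    rw [hre]
    have h1 : ∑ i, α i * (z i).re ≤ ∑ i, α i * Real.log N :=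
      Finset.sum_le_sum (fun i _ => mul_le_mul_of_nonneg_left (hlog i) (hα i))
    have h2 : ρ * α ⟨m - 1, by omega⟩ * (z ⟨m - 2, by omega⟩).re
        ≤ ρ * α ⟨m - 1, by omega⟩ * Real.log N :=
      mul_le_mul_of_nonneg_left (hlog _) (mul_nonneg hρ (hα _))
    rw [← Finset.sum_mul] at h1
    calc _ ≤ (∑ i, α i) * Real.log N + ρ * α ⟨m - 1, by omega⟩ * Real.log N := by linarith
      _ = _ := by ring
  have hE : ‖expMono α (sBlow m hm ρ z)‖
      ≤ N ^ ((∑ i, α i) + ρ * α ⟨m - 1, by omega⟩) := by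
    rw [norm_expMono, Real.rpow_def_of_pos hN0, mul_comm]
    exact Real.exp_le_exp.2 hsum
  -- polynomial part
  have hP : ‖∏ j, y j ^ β j‖ ≤ N ^ (∑ j, (β j : ℝ)) := by
    rw [norm_prod]
    have : ∀ j ∈ Finset.univ, ‖y j ^ β j‖ ≤ N ^ (β j) := by
      intro j _
      rw [norm_pow]
      exact pow_le_pow_left₀ (norm_nonneg _) (norm_y_le_mixedNorm z y j) _
    calc ∏ j, ‖y j ^ β j‖ ≤ ∏ j, N ^ (β j) :=
          Finset.prod_le_prod (fun j _ => by positivity) this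
      _ = N ^ (∑ j, β j) := by rw [Finset.prod_pow_eq_pow_sum]
      _ = N ^ ((∑ j, β j : ℕ) : ℝ) := (Real.rpow_natCast _ _).symm
      _ = N ^ (∑ j, (β j : ℝ)) := by push_cast; rfl
  calc ‖expMono α (sBlow m hm ρ z) * ∏ j, y j ^ β j‖
      = ‖expMono α (sBlow m hm ρ z)‖ * ‖∏ j, y j ^ β j‖ := norm_mul _ _
    _ ≤ N ^ ((∑ i, α i) + ρ * α ⟨m - 1, by omega⟩) * N ^ (∑ j, (β j : ℝ)) := by
        apply mul_le_mul hE hP (norm_nonneg _) (by positivity)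
    _ = N ^ ((∑ i, α i) + ρ * α ⟨m - 1, by omega⟩ + ∑ j, (β j : ℝ)) :=
        (Real.rpow_add hN0 _ _).symm
lemma sBlowCoef_ne_zero {m n : ℕ} (hm : 2 ≤ m) (ρ : ℝ)
    (a : (Fin m → ℝ) → (Fin n → ℕ) → ℂ) {α : Fin m → ℝ} {β : Fin n → ℕ}
    (h : sBlowCoef m n hm ρ a α β ≠ 0) :
    ρ * α ⟨m - 1, by omega⟩ ≤ α ⟨m - 2, by omega⟩ ∧
    a (Function.update α ⟨m - 2, by omega⟩
        (α ⟨m - 2, by omega⟩ - ρ * α ⟨m - 1, by omega⟩)) β ≠ 0 := by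
  by_cases hc : ρ * α ⟨m - 1, by omega⟩ ≤ α ⟨m - 2, by omega⟩
  · refine ⟨hc, ?_⟩
    rwa [sBlowCoef, if_pos hc] at h
  · exfalso; rw [sBlowCoef, if_neg hc] at h; exact h rfl
lemma mixedNatural_sBlowCoef {m n : ℕ} (hm : 2 ≤ m) (ρ : ℝ) (hρ : 0 < ρ)
    (a : (Fin m → ℝ) → (Fin n → ℕ) → ℂ) (ha : MixedNatural a) :
    MixedNatural (sBlowCoef m n hm ρ a) := by
  obtain ⟨hnn, hfin⟩ := ha
  constructor
  · intro α β h i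
    obtain ⟨hc, hne⟩ := sBlowCoef_ne_zero hm ρ a h
    have hnn' := hnn _ _ hne
    rcases eq_or_ne i (⟨m - 2, by omega⟩ : Fin m) with rfl | hi
    · have h1 := hnn' ⟨m - 1, by omega⟩
      rw [Function.update_of_ne (k_ne m hm)] at h1
      nlinarith
    · have := hnn' i
      rwa [Function.update_of_ne hi] at this
  · intro i R hR
    rcases eq_or_ne i (⟨m - 2, by omega⟩ : Fin m) with rfl | hi
    · have hfin2 := hfin ⟨m - 2, by omega⟩ R hR
      have hfin1 := hfin ⟨m - 1, by omega⟩ (R / ρ) (by positivity)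
      apply Set.Finite.subset (Set.Finite.image2 (fun s t => s + ρ * t) hfin2 hfin1)
      rintro r ⟨⟨α, β, hne, hαr⟩, hrR⟩
      obtain ⟨hc, hne'⟩ := sBlowCoef_ne_zero hm ρ a hne
      set α' := Function.update α ⟨m - 2, by omega⟩
        (α ⟨m - 2, by omega⟩ - ρ * α ⟨m - 1, by omega⟩) with hα'
      have hnn' := hnn _ _ hne'
      have hk1 : α' ⟨m - 1, by omega⟩ = α ⟨m - 1, by omega⟩ :=
        Function.update_of_ne (k_ne m hm) _ _
      have hk2 : α' ⟨m - 2, by omega⟩ = α ⟨m - 2, by omega⟩ - ρ * α ⟨m - 1, by omega⟩ :=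
        Function.update_self _ _ _
      have h1 : 0 ≤ α' ⟨m - 1, by omega⟩ := hnn' _
      have h2 : 0 ≤ α' ⟨m - 2, by omega⟩ := hnn' _
      refine Set.mem_image2.2 ⟨α' ⟨m - 2, by omega⟩, ⟨⟨α', β, hne', rfl⟩, ?_⟩,
        α' ⟨m - 1, by omega⟩, ⟨⟨α', β, hne', rfl⟩, ?_⟩, ?_⟩
      · rw [hk2]; rw [hk1] at h1; nlinarith
      · rw [hk1]
        rw [le_div_iff₀ hρ]
        rw [hk1] at h1; rw [hk2] at h2
        nlinarith
      · rw [hk1, hk2, ← hαr]; ring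
    · apply Set.Finite.subset (hfin i R hR)
      rintro r ⟨⟨α, β, hne, hαr⟩, hrR⟩
      obtain ⟨hc, hne'⟩ := sBlowCoef_ne_zero hm ρ a hne
      refine ⟨⟨_, β, hne', ?_⟩, hrR⟩
      rw [Function.update_of_ne hi, hαr]
lemma sblow_differentiable (m : ℕ) (hm : 2 ≤ m) (ρ : ℝ) :
    Differentiable ℂ (sBlow m hm ρ) := by
  rw [differentiable_pi]
  intro i
  rcases eq_or_ne i (⟨m - 1, by omega⟩ : Fin m) with rfl | hi
  · have : (fun z : Fin m → ℂ => sBlow m hm ρ z ⟨m - 1, by omega⟩)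
        = fun z => (ρ : ℂ) * z ⟨m - 2, by omega⟩ + z ⟨m - 1, by omega⟩ := by
      funext z; simp [sBlow]
    rw [this]
    exact ((differentiable_const _).mul (differentiable_apply _)).add (differentiable_apply _)
  · have : (fun z : Fin m → ℂ => sBlow m hm ρ z i) = fun z => z i := by
      funext z; exact sBlow_apply_ne m hm ρ z hi
    rw [this]
    exact differentiable_apply _

/-- The singular blow-up substitution `x_m ↦ x_{m−1}^ρ·x_m` (in
logarithmic coordinates `z_m ↦ ρ z_{m−1} + z_m`) maps `Ω(c,D)^m` into `Ω(c,C)^m` with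
`D = C/min(√ρ,1)`, and transforms a function with mixed asymptotic expansion `a` into one
with mixed asymptotic expansion `B^{ρ,0}_{m,m−1}(a)`. -/
theorem stmt13 (m n : ℕ) (hm : 2 ≤ m) (c C R ρ : ℝ)
    (hc0 : 0 < c) (hc1 : c ≤ 1) (hC : 0 < C) (hR : 0 < R) (hρ : 0 < ρ)
    (f : ((Fin m → ℂ) × (Fin n → ℂ)) → ℂ)
    (hf : DifferentiableOn ℂ f ((QDom c C m) ×ˢ (PDisc R n)))
    (a : (Fin m → ℝ) → (Fin n → ℕ) → ℂ) (ha : HasMixedAsymExp c C R f a) :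
    (∀ z ∈ QDom c (C / min (Real.sqrt ρ) 1) m, sBlow m hm ρ z ∈ QDom c C m) ∧
    DifferentiableOn ℂ (fun p : (Fin m → ℂ) × (Fin n → ℂ) => f (sBlow m hm ρ p.1, p.2))
      ((QDom c (C / min (Real.sqrt ρ) 1) m) ×ˢ (PDisc R n)) ∧
    HasMixedAsymExp c (C / min (Real.sqrt ρ) 1) R
      (fun p => f (sBlow m hm ρ p.1, p.2)) (sBlowCoef m n hm ρ a) := by
  have hμ : 0 < min (Real.sqrt ρ) 1 := mu_pos hρ
  have part1 : ∀ z ∈ QDom c (C / min (Real.sqrt ρ) 1) m, sBlow m hm ρ z ∈ QDom c C m :=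
    fun z hz => sblow_mem m hm ρ hρ c C hc0 hc1 hC hz
  refine ⟨part1, ?_, ?_⟩
  · -- differentiability
    have hφ : Differentiable ℂ (fun p : (Fin m → ℂ) × (Fin n → ℂ) =>
        ((sBlow m hm ρ p.1, p.2) : (Fin m → ℂ) × (Fin n → ℂ))) :=
      ((sblow_differentiable m hm ρ).comp differentiable_fst).prodMk differentiable_snd
    exact hf.comp hφ.differentiableOn
      (fun p hp => Set.mk_mem_prod (part1 p.1 hp.1) hp.2)
  · -- asymptotic expansion
    obtain ⟨hnat, hexp⟩ := ha
    have hnn := hnat.1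
    refine ⟨mixedNatural_sBlowCoef hm ρ hρ a hnat, ?_⟩
    intro ν hν
    obtain ⟨c₁, C₁, R₁, hc₁p, hC₁p, hR₁p, hR₁le, hsub, F, hF, hest⟩ := hexp ν hν
    have hc₂ : 0 < min c₁ c := lt_min hc₁p hc0
    have hc₂1 : min c₁ c ≤ 1 := le_trans (min_le_right _ _) hc1
    have hC₂ : 0 < max C₁ C := lt_max_of_lt_right hC
    set F₂ : Finset ((Fin m → ℝ) × (Fin n → ℕ)) :=
      F.filter (fun p => (∑ i, Tmap m hm ρ p.1 i) + ∑ j, ((p.2 j : ℝ)) ≤ ν) with hF₂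
    set G : Finset ((Fin m → ℝ) × (Fin n → ℕ)) :=
      F.filter (fun p => ¬ ((∑ i, Tmap m hm ρ p.1 i) + ∑ j, ((p.2 j : ℝ)) ≤ ν)) with hG
    refine ⟨min c₁ c, (max C₁ C) / min (Real.sqrt ρ) 1, R₁,
      hc₂, by positivity, hR₁p, hR₁le, ?_,
      F₂.image (fun p => (Tmap m hm ρ p.1, p.2)), ?_, ?_⟩
    · -- SQD inclusion
      exact sqd_mono hc₂ (min_le_right _ _) (by gcongr; exact le_max_right _ _)
    · -- characterization of the finset
      intro p
      constructor
      · intro hp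
        obtain ⟨q, hq, hqp⟩ := Finset.mem_image.1 hp
        rw [hF₂, Finset.mem_filter] at hq
        obtain ⟨hqF, hqwt⟩ := hq
        obtain ⟨hqa, _⟩ := (hF q).1 hqF
        have h2 : 0 ≤ q.1 ⟨m - 2, by omega⟩ := hnn _ _ hqa _
        subst hqp
        constructor
        · simpa [sBlowCoef_Tmap hm ρ a q.1 q.2 h2] using hqa
        · simpa using hqwt
      · rintro ⟨hb, hwt⟩
        obtain ⟨hcond, hne'⟩ := sBlowCoef_ne_zero hm ρ a hb
        set α' := Function.update p.1 ⟨m - 2, by omega⟩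
          (p.1 ⟨m - 2, by omega⟩ - ρ * p.1 ⟨m - 1, by omega⟩) with hα'
        have hT : Tmap m hm ρ α' = p.1 := Tmap_inv m hm ρ p.1
        have hk1' : α' ⟨m - 1, by omega⟩ = p.1 ⟨m - 1, by omega⟩ :=
          Function.update_of_ne (k_ne m hm) _ _
        have h1 : 0 ≤ α' ⟨m - 1, by omega⟩ := hnn _ _ hne' _
        have hsumα' : ∑ i, α' i = (∑ i, p.1 i) - ρ * p.1 ⟨m - 1, by omega⟩ := by
          have := sum_Tmap m hm ρ α'
          rw [hT, hk1'] at this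
          linarith
        apply Finset.mem_image.2
        refine ⟨(α', p.2), ?_, ?_⟩
        · rw [hF₂, Finset.mem_filter]
          refine ⟨(hF (α', p.2)).2 ⟨hne', ?_⟩, ?_⟩
          · simp only
            rw [hsumα']
            rw [hk1'] at h1
            nlinarith
          · simp only
            rw [hT]
            exact hwt
        · simp only
          rw [hT]
      -- the estimate
    · intro ε hε
      obtain ⟨δf, hδf, hestf⟩ := hest (ε / 2) (half_pos hε)
      set e : ((Fin m → ℝ) × (Fin n → ℕ)) → ℝ :=
        fun p => (∑ i, Tmap m hm ρ p.1 i) + (∑ j, ((p.2 j : ℝ))) - ν with he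
      have hepos : ∀ p ∈ G, 0 < e p := by
        intro p hp
        rw [hG, Finset.mem_filter] at hp
        have h := hp.2
        push_neg at h
        simp only [he]
        linarith
      have htend : Filter.Tendsto
          (fun t : ℝ => ∑ p ∈ G, ‖a p.1 p.2‖ * t ^ (e p)) (nhds 0) (nhds 0) := by
        have h0 : (0:ℝ) = ∑ p ∈ G, ‖a p.1 p.2‖ * (0:ℝ) := by simp
        rw [h0]
        apply tendsto_finset_sum
        intro p hp
        have h1 : Filter.Tendsto (fun t : ℝ => t ^ (e p)) (nhds 0) (nhds 0) := by
          have hcont := (Real.continuousAt_rpow_const 0 (e p) (Or.inr (hepos p hp).le)).tendsto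
          rwa [Real.zero_rpow (hepos p hp).ne'] at hcont
        simpa using h1.const_mul ‖a p.1 p.2‖
      have hev : ∀ᶠ t in nhds (0:ℝ),
          (∑ p ∈ G, ‖a p.1 p.2‖ * t ^ (e p)) < ε / 2 :=
        htend.eventually (Filter.Tendsto.eventually_lt_const (half_pos hε) Filter.tendsto_id)
      obtain ⟨r, hr, hrball⟩ := Metric.eventually_nhds_iff.1 hev
      set δt := r / 2 with hδt
      have hδt0 : 0 < δt := by positivity
      have htail : (∑ p ∈ G, ‖a p.1 p.2‖ * δt ^ (e p)) < ε / 2 := by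
        apply hrball
        rw [Real.dist_eq, sub_zero, abs_of_pos hδt0]
        linarith
      refine ⟨min δt δf, lt_min hδt0 hδf, ?_⟩
      intro z hz y hy hNδ
      set N := mixedNorm z y with hN
      have hN0 : 0 < N := mixedNorm_pos (by omega) z y
      set w := sBlow m hm ρ z with hw
      -- membership of w
      have hzdom : z ∈ QDom (min c₁ c) ((max C₁ C) / min (Real.sqrt ρ) 1) m := hz
      have hwdom : w ∈ QDom c₁ C₁ m := by
        have h1 := sblow_mem m hm ρ hρ (min c₁ c) (max C₁ C) hc₂ hc₂1 hC₂ hzdom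
        exact qdom_mono hc₂ (min_le_left _ _) (le_max_left _ _) h1
      -- Re z k₂ ≤ 0
      have hz2re : (z ⟨m - 2, by omega⟩).re ≤ 0 := by
        have h1 := hzdom ⟨m - 2, by omega⟩
        simp only [SQD, Set.mem_setOf_eq] at h1
        have h2 : Real.log (min c₁ c) ≤ 0 := Real.log_nonpos hc₂.le hc₂1
        nlinarith [Real.sqrt_nonneg |(z ⟨m - 2, by omega⟩).im|,
          div_pos hC₂ hμ]
      have hNw : mixedNorm w y ≤ N := mixedNorm_sBlow_le hm ρ hρ z y hz2re
      -- f-estimate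
      have hmain := hestf w hwdom y hy (lt_of_le_of_lt hNw
        (lt_of_lt_of_le hNδ (min_le_right _ _)))
      -- rewrite the image sum
      have hinj : Set.InjOn (fun p : (Fin m → ℝ) × (Fin n → ℕ) =>
          ((Tmap m hm ρ p.1, p.2) : (Fin m → ℝ) × (Fin n → ℕ))) F₂ := by
        intro p _ q _ hpq
        simp only [Prod.mk.injEq] at hpq
        exact Prod.ext (Tmap_injective m hm ρ hpq.1) hpq.2
      have hsum_image :
          ∑ p ∈ F₂.image (fun p => (Tmap m hm ρ p.1, p.2)),
            sBlowCoef m n hm ρ a p.1 p.2 * expMono p.1 z * ∏ j, (y j) ^ (p.2 j)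
          = ∑ q ∈ F₂, a q.1 q.2 * expMono q.1 w * ∏ j, (y j) ^ (q.2 j) := by
        rw [Finset.sum_image (fun p hp q hq h => hinj hp hq h)]
        apply Finset.sum_congr rfl
        intro q hq
        rw [hF₂, Finset.mem_filter] at hq
        obtain ⟨hqa, _⟩ := (hF q).1 hq.1
        have h2 : 0 ≤ q.1 ⟨m - 2, by omega⟩ := hnn _ _ hqa _
        rw [sBlowCoef_Tmap hm ρ a q.1 q.2 h2, expMono_Tmap]
      -- split the F-sum
      have hsplit :
          ∑ p ∈ F, a p.1 p.2 * expMono p.1 w * ∏ j, (y j) ^ (p.2 j)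
          = (∑ p ∈ F₂, a p.1 p.2 * expMono p.1 w * ∏ j, (y j) ^ (p.2 j))
            + ∑ p ∈ G, a p.1 p.2 * expMono p.1 w * ∏ j, (y j) ^ (p.2 j) := by
        rw [hF₂, hG]
        exact (Finset.sum_filter_add_sum_filter_not F _ _).symm
      -- tail bound
      have htailbound :
          ‖∑ p ∈ G, a p.1 p.2 * expMono p.1 w * ∏ j, (y j) ^ (p.2 j)‖
            ≤ (ε / 2) * N ^ ν := by
        calc ‖∑ p ∈ G, a p.1 p.2 * expMono p.1 w * ∏ j, (y j) ^ (p.2 j)‖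
            ≤ ∑ p ∈ G, ‖a p.1 p.2 * expMono p.1 w * ∏ j, (y j) ^ (p.2 j)‖ :=
              norm_sum_le _ _
          _ ≤ ∑ p ∈ G, ‖a p.1 p.2‖ * (δt ^ (e p) * N ^ ν) := by
              apply Finset.sum_le_sum
              intro p hp
              have hpF : p ∈ F := Finset.mem_of_mem_filter p hp
              obtain ⟨hpa, _⟩ := (hF p).1 hpF
              have hα : ∀ i, 0 ≤ p.1 i := hnn _ _ hpa
              have hb := blow_term_bound hm ρ hρ.le z y p.1 hα p.2
              have hexp_eq : (∑ i, p.1 i) + ρ * p.1 ⟨m - 1, by omega⟩ + ∑ j, ((p.2 j : ℝ))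
                  = e p + ν := by
                simp only [he]
                rw [sum_Tmap]
                ring
              rw [hexp_eq] at hb
              have hNe : N ^ (e p + ν) = N ^ (e p) * N ^ ν := Real.rpow_add hN0 _ _
              have hNδt : N ^ (e p) ≤ δt ^ (e p) := by
                apply Real.rpow_le_rpow hN0.le _ (hepos p hp).le
                exact le_trans hNδ.le (min_le_left _ _)
              calc ‖a p.1 p.2 * expMono p.1 w * ∏ j, (y j) ^ (p.2 j)‖
                  = ‖a p.1 p.2‖ * ‖expMono p.1 w * ∏ j, (y j) ^ (p.2 j)‖ := by
                    rw [mul_assoc, norm_mul]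
                _ ≤ ‖a p.1 p.2‖ * N ^ (e p + ν) :=
                    mul_le_mul_of_nonneg_left hb (norm_nonneg _)
                _ = ‖a p.1 p.2‖ * (N ^ (e p) * N ^ ν) := by rw [hNe]
                _ ≤ ‖a p.1 p.2‖ * (δt ^ (e p) * N ^ ν) := by
                    apply mul_le_mul_of_nonneg_left _ (norm_nonneg _)
                    exact mul_le_mul_of_nonneg_right hNδt (Real.rpow_nonneg hN0.le _)
          _ = (∑ p ∈ G, ‖a p.1 p.2‖ * δt ^ (e p)) * N ^ ν := by
              rw [Finset.sum_mul]
              apply Finset.sum_congr rfl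
              intro p _
              ring
          _ ≤ (ε / 2) * N ^ ν := by
              apply mul_le_mul_of_nonneg_right htail.le (Real.rpow_nonneg hN0.le _)
      -- conclude
      have hNwν : mixedNorm w y ^ ν ≤ N ^ ν :=
        Real.rpow_le_rpow (mixedNorm_nonneg _ _) hNw hν.le
      have hmain' : ‖f (w, y) - ∑ p ∈ F, a p.1 p.2 * expMono p.1 w * ∏ j, (y j) ^ (p.2 j)‖
          ≤ (ε / 2) * N ^ ν := by
        calc _ ≤ (ε / 2) * mixedNorm w y ^ ν := hmain
          _ ≤ (ε / 2) * N ^ ν := mul_le_mul_of_nonneg_left hNwν (half_pos hε).le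
      calc ‖f (w, y) - ∑ p ∈ F₂.image (fun p => (Tmap m hm ρ p.1, p.2)),
              sBlowCoef m n hm ρ a p.1 p.2 * expMono p.1 z * ∏ j, (y j) ^ (p.2 j)‖
          = ‖(f (w, y) - ∑ p ∈ F, a p.1 p.2 * expMono p.1 w * ∏ j, (y j) ^ (p.2 j))
              + ∑ p ∈ G, a p.1 p.2 * expMono p.1 w * ∏ j, (y j) ^ (p.2 j)‖ := by
            rw [hsum_image, hsplit]
            congr 1
            ring
        _ ≤ ‖f (w, y) - ∑ p ∈ F, a p.1 p.2 * expMono p.1 w * ∏ j, (y j) ^ (p.2 j)‖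
            + ‖∑ p ∈ G, a p.1 p.2 * expMono p.1 w * ∏ j, (y j) ^ (p.2 j)‖ := norm_add_le _ _
        _ ≤ (ε / 2) * N ^ ν + (ε / 2) * N ^ ν := add_le_add hmain' htailbound
        _ = ε * N ^ ν := by ring
end
end
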